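/- arXiv:1512.01349 — 6 statements merged into one kernel-verified Lean document; each statement's English description precedes it below -/
import Mathlib

section
/- Let F be a field and Q an F-quaternion algebra (a central simple F-algebra of F-dimension 4). Let v ∈ Q with v ∉ F·1 and v·v = b·1 for some b ∈ F with b ≠ 0. Then there exist u ∈ Q and a ∈ F with 1 + 4a ≠ 0 such that u·v = v·(1 − u) and u·u − u = a·1; moreover the four elements (1, u, v, u·v) form an F-basis of Q. -/
namespace QBC

/-- A submodule closed under left and right multiplication in a simple ring is ⊥ or ⊤. -/
lemma submodule_ideal_bot_or_top {F Q : Type*} [Field F] [Ring Q] [Algebra F Q]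
    [IsSimpleRing Q] (M : Submodule F Q)
    (hl : ∀ q z : Q, z ∈ M → q * z ∈ M) (hr : ∀ q z : Q, z ∈ M → z * q ∈ M) :
    M = ⊥ ∨ M = ⊤ := by
  let I : TwoSidedIdeal Q := TwoSidedIdeal.mk' M
    M.zero_mem (fun hx hy => M.add_mem hx hy) (fun hx => M.neg_mem hx)
    (fun {a b} hb => hl a b hb) (fun {a b} ha => hr b a ha)
  have hmem : ∀ z : Q, z ∈ I ↔ z ∈ M := fun z =>
    TwoSidedIdeal.mem_mk' _ _ _ _ _ _ z
  rcases IsSimpleOrder.eq_bot_or_eq_top I with h | h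
  · left
    rw [eq_bot_iff]
    intro z hz
    have : z ∈ I := (hmem z).2 hz
    rw [h, TwoSidedIdeal.mem_bot] at this
    simpa [this] using M.zero_mem
  · right
    rw [Submodule.eq_top_iff']
    intro z
    exact (hmem z).1 (h ▸ TwoSidedIdeal.mem_top Q)

lemma sandwich_span_top (F : Type*) {Q : Type*} [Field F] [Ring Q] [Algebra F Q]
    [IsSimpleRing Q] (x : Q) (hx : x ≠ 0) :
    Submodule.span F {z : Q | ∃ a b : Q, z = a * x * b} = ⊤ := by
  set S : Set Q := {z : Q | ∃ a b : Q, z = a * x * b} with hS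
  set M := Submodule.span F S with hM
  have hmul_left : ∀ (q z : Q), z ∈ M → q * z ∈ M := by
    intro q z hz
    induction hz using Submodule.span_induction with
    | mem w hw => obtain ⟨a, c, rfl⟩ := hw; exact Submodule.subset_span ⟨q*a, c, by noncomm_ring⟩
    | zero => simpa using M.zero_mem
    | add y w hy hw ihy ihw => rw [mul_add]; exact M.add_mem ihy ihw
    | smul c y hy ih => rw [mul_smul_comm]; exact M.smul_mem c ih
  have hmul_right : ∀ (q z : Q), z ∈ M → z * q ∈ M := by
    intro q z hz
    induction hz using Submodule.span_induction with
    | mem w hw => obtain ⟨a, c, rfl⟩ := hw; exact Submodule.subset_span ⟨a, c*q, by noncomm_ring⟩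
    | zero => simpa using M.zero_mem
    | add y w hy hw ihy ihw => rw [add_mul]; exact M.add_mem ihy ihw
    | smul c y hy ih => rw [smul_mul_assoc]; exact M.smul_mem c ih
  have hxM : x ∈ M := Submodule.subset_span ⟨1, 1, by simp⟩
  rcases submodule_ideal_bot_or_top M hmul_left hmul_right with h | h
  · exact absurd (h ▸ hxM) (by simpa using hx)
  · exact h

/-- If `x ≠ 0` in a simple ring, then `xQx ≠ 0`. -/
lemma exists_sandwich_ne_zero (F : Type*) {Q : Type*} [Field F] [Ring Q] [Algebra F Q]
    [IsSimpleRing Q] (x : Q) (hx : x ≠ 0) :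
    ∃ a : Q, x * a * x ≠ 0 := by
  by_contra hall
  push_neg at hall
  have htop := sandwich_span_top F x hx
  have key : ∀ z ∈ Submodule.span F {z : Q | ∃ a b : Q, z = a * x * b},
      ∀ w ∈ Submodule.span F {z : Q | ∃ a b : Q, z = a * x * b}, z * w = 0 := by
    intro z hz
    induction hz using Submodule.span_induction with
    | mem z1 hz1 =>
      intro w hw
      induction hw using Submodule.span_induction with
      | mem w1 hw1 =>
        obtain ⟨a, c, rfl⟩ := hz1
        obtain ⟨a', c', rfl⟩ := hw1
        have h0 : x * (c * a') * x = 0 := hall _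
        calc a * x * c * (a' * x * c') = a * (x * (c * a') * x) * c' := by noncomm_ring
        _ = 0 := by rw [h0]; noncomm_ring
      | zero => simp
      | add y w hy hw ihy ihw => rw [mul_add, ihy, ihw]; simp
      | smul c y hy ih => rw [mul_smul_comm, ih]; simp
    | zero => intro w hw; simp
    | add y w hy hw ihy ihw => intro r hr; rw [add_mul, ihy r hr, ihw r hr]; simp
    | smul c y hy ih => intro r hr; rw [smul_mul_assoc, ih r hr]; simp
  have h1 : (1 : Q) ∈ Submodule.span F {z : Q | ∃ a b : Q, z = a * x * b} := by
    rw [htop]; trivial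
  have := key 1 h1 1 h1
  simp at this

/-- nontrivial corners of an idempotent in a simple ring. -/
lemma corner_ne_zero (F : Type*) {Q : Type*} [Field F] [Ring Q] [Algebra F Q]
    [IsSimpleRing Q] (g : Q) (hg : g * g = g) (hg0 : g ≠ 0)
    (hg1 : (1 : Q) - g ≠ 0) :
    (∃ z : Q, g * z * (1 - g) ≠ 0) ∧ (∃ z : Q, (1 - g) * z * g ≠ 0) := by
  have htop := sandwich_span_top F g hg0
  have h1 : (1 : Q) ∈ Submodule.span F {z : Q | ∃ a b : Q, z = a * g * b} := by
    rw [htop]; trivial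
  have hfgf : (1 - g : Q) * (1 - g) = 1 - g := by
    have h : (1 - g : Q) * (1 - g) = 1 - g - g + g * g := by noncomm_ring
    rw [h, hg]; noncomm_ring
  constructor
  · by_contra hall
    push_neg at hall
    have key : ∀ z ∈ Submodule.span F {z : Q | ∃ a b : Q, z = a * g * b},
        (1 - g) * z * (1 - g) = 0 := by
      intro z hz
      induction hz using Submodule.span_induction with
      | mem w hw =>
        obtain ⟨a, c, rfl⟩ := hw
        have h2 : g * c * (1 - g) = 0 := hall c
        calc (1 - g) * (a * g * c) * (1 - g) = ((1 - g) * a) * (g * c * (1 - g)) := by noncomm_ring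
        _ = 0 := by rw [h2]; noncomm_ring
      | zero => simp
      | add y w hy hw ihy ihw =>
        have h3 : (1 - g) * (y + w) * (1 - g)
            = (1 - g) * y * (1 - g) + (1 - g) * w * (1 - g) := by noncomm_ring
        rw [h3, ihy, ihw]; simp
      | smul c y hy ih =>
        rw [mul_smul_comm, smul_mul_assoc, ih]; simp
    have := key 1 h1
    rw [mul_one, hfgf] at this
    exact hg1 this
  · by_contra hall
    push_neg at hall
    have key : ∀ z ∈ Submodule.span F {z : Q | ∃ a b : Q, z = a * g * b},
        (1 - g) * z * (1 - g) = 0 := by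
      intro z hz
      induction hz using Submodule.span_induction with
      | mem w hw =>
        obtain ⟨a, c, rfl⟩ := hw
        have h2 : (1 - g) * a * g = 0 := hall a
        calc (1 - g) * (a * g * c) * (1 - g) = ((1 - g) * a * g) * (c * (1 - g)) := by noncomm_ring
        _ = 0 := by rw [h2]; noncomm_ring
      | zero => simp
      | add y w hy hw ihy ihw =>
        have h3 : (1 - g) * (y + w) * (1 - g)
            = (1 - g) * y * (1 - g) + (1 - g) * w * (1 - g) := by noncomm_ring
        rw [h3, ihy, ihw]; simp
      | smul c y hy ih =>
        rw [mul_smul_comm, smul_mul_assoc, ih]; simp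
    have := key 1 h1
    rw [mul_one, hfgf] at this
    exact hg1 this

/-- An element commuting with a spanning set is in the image of `F`. -/
lemma central_of_commutes {F Q : Type*} [Field F] [Ring Q] [Algebra F Q]
    [Algebra.IsCentral F Q] (S : Set Q)
    (hspan : Submodule.span F S = ⊤) (c : Q) (hc : ∀ s ∈ S, c * s = s * c) :
    ∃ a : F, c = algebraMap F Q a := by
  have hall : ∀ x : Q, x * c = c * x := by
    intro x
    have hx : x ∈ Submodule.span F S := by rw [hspan]; trivial
    induction hx using Submodule.span_induction with
    | mem w hw => exact (hc w hw).symm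
    | zero => simp
    | add y w hy hw ihy ihw => rw [add_mul, mul_add, ihy, ihw]
    | smul a y hy ih => rw [smul_mul_assoc, mul_smul_comm, ih]
  have hcen : c ∈ Subalgebra.center F Q := Subalgebra.mem_center_iff.2 hall
  have hbot := Algebra.IsCentral.out (K := F) (D := Q) hcen
  rw [Algebra.mem_bot] at hbot
  obtain ⟨a, ha⟩ := hbot
  exact ⟨a, ha.symm⟩

lemma range_four {Q : Type*} (a b c d : Q) : Set.range ![a, b, c, d] = {a, b, c, d} := by
  ext x
  constructor
  · rintro ⟨i, rfl⟩
    fin_cases i <;> simp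
  · intro hx
    rcases hx with rfl | rfl | rfl | rfl
    · exact ⟨0, rfl⟩
    · exact ⟨1, rfl⟩
    · exact ⟨2, rfl⟩
    · exact ⟨3, rfl⟩

lemma span_top_of_indep {F Q : Type*} [Field F] [Ring Q] [Algebra F Q]
    (hdim : Module.finrank F Q = 4) (a b c d : Q)
    (h : LinearIndependent F ![a, b, c, d]) :
    Submodule.span F {a, b, c, d} = ⊤ := by
  have hfd : FiniteDimensional F Q := FiniteDimensional.of_finrank_pos (by omega)
  have h1 : Module.finrank F (Submodule.span F (Set.range ![a,b,c,d])) = 4 := by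
    rw [finrank_span_eq_card h]; simp
  rw [← range_four]
  exact Submodule.eq_top_of_finrank_eq (by rw [h1, hdim])



lemma comb2_zero {F Q : Type*} [Field F] [Ring Q] [Algebra F Q] [Nontrivial Q]
    (v : Q) (hv : v ∉ Set.range (algebraMap F Q)) {α γ : F}
    (h : α • (1 : Q) + γ • v = 0) : α = 0 ∧ γ = 0 := by
  by_cases hγ : γ = 0
  · subst hγ
    rw [zero_smul, add_zero] at h
    rcases smul_eq_zero.mp h with h' | h'
    · exact ⟨h', rfl⟩
    · exact absurd h' one_ne_zero
  · exfalso
    apply hv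
    refine ⟨-(γ⁻¹ * α), ?_⟩
    have hv' : v = (-(γ⁻¹ * α)) • (1 : Q) := by
      have h1 : γ • v = -(α • (1 : Q)) := eq_neg_of_add_eq_zero_right h
      have h2 : v = γ⁻¹ • (γ • v) := by
        rw [smul_smul, inv_mul_cancel₀ hγ, one_smul]
      rw [h2, h1, smul_neg, smul_smul, ← neg_smul]
    rw [Algebra.algebraMap_eq_smul_one]
    exact hv'.symm

lemma indep_of_rel {F Q : Type*} [Field F] [Ring Q] [Algebra F Q] [Nontrivial Q]
    (v : Q) (hv : v ∉ Set.range (algebraMap F Q)) (b : F) (hb : b ≠ 0)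
    (hvv : v * v = algebraMap F Q b)
    (u : Q) (hrel : u * v = v * (1 - u))
    (hfac : ∀ β δ : F,
      ((2 : Q) * u - 1) * (algebraMap F Q β + algebraMap F Q δ * v) = 0 → β = 0 ∧ δ = 0) :
    LinearIndependent F ![1, u, v, u * v] := by
  rw [Fintype.linearIndependent_iff]
  intro g hg
  rw [Fin.sum_univ_four] at hg
  simp only [Matrix.cons_val_zero, Matrix.cons_val_one, Matrix.head_cons,
    Matrix.cons_val_two, Matrix.cons_val_three, Matrix.tail_cons] at hg
  -- hg : g 0 • 1 + g 1 • u + g 2 • v + g 3 • (u * v) = 0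
  have hvuv : v * u * v = b • (1 - u) := by
    calc v * u * v = v * (u * v) := by rw [mul_assoc]
    _ = v * (v * (1 - u)) := by rw [hrel]
    _ = (v * v) * (1 - u) := by rw [mul_assoc]
    _ = b • (1 - u) := by rw [hvv, Algebra.smul_def]
  have h0 : v * (g 0 • (1 : Q) + g 1 • u + g 2 • v + g 3 • (u * v)) * v = 0 := by
    rw [hg]; simp
  have e0 : v * (1 : Q) * v = b • (1 : Q) := by
    rw [mul_one, hvv, Algebra.algebraMap_eq_smul_one]
  have e2 : v * v * v = b • v := by
    rw [hvv, ← Algebra.smul_def]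
  have e3 : v * (u * v) * v = b • ((1 - u) * v) := by
    rw [← mul_assoc, hvuv, smul_mul_assoc]
  have hexp : v * (g 0 • (1 : Q) + g 1 • u + g 2 • v + g 3 • (u * v)) * v
      = b • (g 0 • (1 : Q) + g 1 • (1 - u) + g 2 • v + g 3 • ((1 - u) * v)) := by
    simp only [mul_add, add_mul, mul_smul_comm, smul_mul_assoc]
    rw [e0, hvuv, e2, e3]
    simp only [smul_add, smul_smul, mul_comm b]
  rw [hexp] at h0
  have hE2 : g 0 • (1 : Q) + g 1 • (1 - u) + g 2 • v + g 3 • ((1 - u) * v) = 0 := by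
    rcases smul_eq_zero.mp h0 with h' | h'
    · exact absurd h' hb
    · exact h'
  have k1 : u - (1 - u) = (2 : Q) * u - 1 := by noncomm_ring
  have k2 : u * v - (1 - u) * v = ((2 : Q) * u - 1) * v := by noncomm_ring
  have hsub : g 1 • ((2 : Q) * u - 1) + g 3 • (((2 : Q) * u - 1) * v) = 0 := by
    calc g 1 • ((2 : Q) * u - 1) + g 3 • (((2 : Q) * u - 1) * v)
        = (g 0 • (1 : Q) + g 1 • u + g 2 • v + g 3 • (u * v))
          - (g 0 • (1 : Q) + g 1 • (1 - u) + g 2 • v + g 3 • ((1 - u) * v)) := by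
          rw [← k2, ← k1]; simp only [smul_sub]; abel
    _ = 0 - 0 := by rw [hg, hE2]
    _ = 0 := by simp
  have hfac_in : ((2 : Q) * u - 1) * (algebraMap F Q (g 1) + algebraMap F Q (g 3) * v) = 0 := by
    have expand : ((2 : Q) * u - 1) * (algebraMap F Q (g 1) + algebraMap F Q (g 3) * v)
        = g 1 • ((2 : Q) * u - 1) + g 3 • (((2 : Q) * u - 1) * v) := by
      rw [mul_add]
      congr 1
      · rw [← Algebra.commutes, ← Algebra.smul_def]
      · rw [← mul_assoc, ← Algebra.commutes, ← Algebra.smul_def, smul_mul_assoc]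
    rw [expand, hsub]
  obtain ⟨h1z, h3z⟩ := hfac (g 1) (g 3) hfac_in
  rw [h1z, h3z, zero_smul, zero_smul, add_zero, add_zero] at hg
  obtain ⟨h0z, h2z⟩ := comb2_zero v hv hg
  intro i
  fin_cases i
  · exact h0z
  · exact h1z
  · exact h2z
  · exact h3z


lemma exists_w {F Q : Type*} [Field F] [Ring Q] [Algebra F Q] [IsSimpleRing Q]
    [Algebra.IsCentral F Q]
    (h2 : (2 : F) ≠ 0) (v : Q) (hv : v ∉ Set.range (algebraMap F Q))
    (b : F) (hb : b ≠ 0) (hvv : v * v = algebraMap F Q b) :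
    ∃ w : Q, w ≠ 0 ∧ v * w + w * v = 0 ∧
      (∀ γ δ : F, w * (algebraMap F Q γ + algebraMap F Q δ * v) = 0 → γ = 0 ∧ δ = 0) := by
  have hsmul1 : ∀ c : F, algebraMap F Q c = c • (1 : Q) := fun c =>
    Algebra.algebraMap_eq_smul_one c
  have hvv' : v * v = b • (1 : Q) := by rw [hvv, hsmul1]
  by_cases hsq : ∃ β : F, β * β = b
  · -- b is a square : Peirce decomposition
    obtain ⟨β, hβ⟩ := hsq
    have hβ0 : β ≠ 0 := fun h => hb (by rw [← hβ, h, mul_zero])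
    have h2β : (2 * β : F) ≠ 0 := mul_ne_zero h2 hβ0
    set e : Q := (2 * β)⁻¹ • (v + β • (1:Q)) with he_def
    have he2 : (2 * β) • e = v + β • (1:Q) := by
      rw [he_def, smul_smul, mul_inv_cancel₀ h2β, one_smul]
    have hvvβ : v * v = (β * β) • (1 : Q) := by rw [hvv', hβ]
    have hee : e * e = e := by
      rw [he_def]
      simp only [smul_mul_assoc, mul_smul_comm, add_mul, mul_add, one_mul, mul_one,
        hvvβ, smul_smul]
      match_scalars <;> field_simp <;> ring
    have he0 : e ≠ 0 := by
      intro h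
      apply hv
      have h0 : v + β • (1:Q) = 0 := by rw [← he2, h, smul_zero]
      have : v = -(β • (1:Q)) := eq_neg_of_add_eq_zero_left h0
      exact ⟨-β, by rw [map_neg, hsmul1, ← neg_smul, this, neg_smul]⟩
    have hf0 : (1 : Q) - e ≠ 0 := by
      intro h
      apply hv
      have he1 : (1:Q) = e := sub_eq_zero.mp h
      have h0 : v + β • (1:Q) = (2*β) • (1:Q) := by rw [← he2, ← he1]
      refine ⟨β, ?_⟩
      rw [hsmul1]
      have : v = (2*β) • (1:Q) - β • (1:Q) := by rw [← h0]; abel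
      rw [this, ← sub_smul]
      congr 1
      ring
    have hv_eq : v = (2*β) • e - β • (1:Q) := by rw [he2]; abel
    -- action of v on e and f = 1 - e
    have hve : v * e = β • e := by
      conv_lhs => rw [hv_eq]
      simp only [sub_mul, smul_mul_assoc, one_mul, hee]
      match_scalars <;> ring
    have hev : e * v = β • e := by
      conv_lhs => rw [hv_eq]
      simp only [mul_sub, mul_smul_comm, mul_one, hee]
      match_scalars <;> ring
    have hvf : v * (1 - e) = (-β) • (1 - e) := by
      rw [mul_sub, mul_one, hve, smul_sub, hv_eq]
      match_scalars <;> ring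
    have hfv : (1 - e) * v = (-β) • (1 - e) := by
      rw [sub_mul, one_mul, hev, smul_sub, hv_eq]
      match_scalars <;> ring
    obtain ⟨⟨x₁, hx₁⟩, ⟨x₂, hx₂⟩⟩ := corner_ne_zero (F := F) e hee he0 hf0
    set p : Q := e * x₁ * (1 - e) with hp_def
    set q : Q := (1 - e) * x₂ * e with hq_def
    have hfe : (1 - e : Q) * e = 0 := by
      rw [sub_mul, one_mul, hee, sub_self]
    have hef : (e : Q) * (1 - e) = 0 := by
      rw [mul_sub, mul_one, hee, sub_self]
    have hff : (1 - e : Q) * (1 - e) = 1 - e := by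
      rw [sub_mul, one_mul, mul_sub, mul_one, hee]; abel
    have hep : e * p = p := by rw [hp_def, ← mul_assoc, ← mul_assoc, hee]
    have hpf : p * (1 - e) = p := by rw [hp_def, mul_assoc, mul_assoc, hff, ← mul_assoc]
    have hfp : (1 - e) * p = 0 := by rw [hp_def, ← mul_assoc, ← mul_assoc, hfe, zero_mul, zero_mul]
    have hfq : (1 - e) * q = q := by rw [hq_def, ← mul_assoc, ← mul_assoc, hff]
    have hqe : q * e = q := by rw [hq_def, mul_assoc, mul_assoc, hee, ← mul_assoc]
    have heq : e * q = 0 := by rw [hq_def, ← mul_assoc, ← mul_assoc, hef, zero_mul, zero_mul]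
    have hvp : v * p = β • p := by
      rw [hp_def, ← mul_assoc, ← mul_assoc, hve, smul_mul_assoc, smul_mul_assoc]
    have hpv : p * v = (-β) • p := by
      rw [hp_def, mul_assoc, mul_assoc, hfv, mul_smul_comm, mul_smul_comm, ← mul_assoc]
    have hvq : v * q = (-β) • q := by
      rw [hq_def, ← mul_assoc, ← mul_assoc, hvf, smul_mul_assoc, smul_mul_assoc]
    have hqv : q * v = β • q := by
      rw [hq_def, mul_assoc, mul_assoc, hev, mul_smul_comm, mul_smul_comm, ← mul_assoc]
    have hpq_p : e * (p + q) * (1 - e) = p := by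
      rw [mul_add, hep, heq, add_zero, hpf]
    refine ⟨p + q, ?_, ?_, ?_⟩
    · intro h
      apply hx₁
      have : e * (p + q) * (1 - e) = 0 := by rw [h, mul_zero, zero_mul]
      rw [hpq_p] at this
      rw [hp_def] at this
      exact this
    · rw [mul_add, add_mul, hvp, hvq, hpv, hqv]
      module
    · intro γ δ h
      have hk : (p + q) * (algebraMap F Q γ + algebraMap F Q δ * v)
          = (γ - δ * β) • p + (γ + δ * β) • q := by
        rw [hsmul1 γ, ← Algebra.smul_def]
        rw [mul_add, mul_smul_comm, mul_one, mul_smul_comm, add_mul, hpv, hqv]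
        module
      rw [hk] at h
      have hp0 : (γ - δ * β) • p = 0 := by
        have h1 : e * ((γ - δ * β) • p + (γ + δ * β) • q) * (1 - e) = 0 := by
          rw [h, mul_zero, zero_mul]
        simp only [mul_add, add_mul, mul_smul_comm, smul_mul_assoc] at h1
        rw [hep, hpf, heq, zero_mul, smul_zero, add_zero] at h1
        exact h1
      have hq0 : (γ + δ * β) • q = 0 := by
        have h1 : (1 - e) * ((γ - δ * β) • p + (γ + δ * β) • q) * e = 0 := by
          rw [h, mul_zero, zero_mul]
        simp only [mul_add, add_mul, mul_smul_comm, smul_mul_assoc] at h1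
        rw [hfp, hfq, hqe, zero_mul, smul_zero, zero_add] at h1
        exact h1
      have hc1 : γ - δ * β = 0 := by
        rcases smul_eq_zero.mp hp0 with h' | h'
        · exact h'
        · exact absurd h' hx₁
      have hc2 : γ + δ * β = 0 := by
        rcases smul_eq_zero.mp hq0 with h' | h'
        · exact h'
        · exact absurd h' hx₂
      have hγ : γ = 0 := by
        have h2γ : (2:F) * γ = 0 := by linear_combination hc1 + hc2
        rcases mul_eq_zero.mp h2γ with h' | h'
        · exact absurd h' h2
        · exact h'
      refine ⟨hγ, ?_⟩
      have : δ * β = 0 := by rw [hγ] at hc2; linear_combination hc2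
      rcases mul_eq_zero.mp this with h' | h'
      · exact h'
      · exact absurd h' hβ0
  · -- b is not a square
    have hvc : ∃ x : Q, ¬ (v * x = x * v) := by
      by_contra hall
      push_neg at hall
      apply hv
      have hcen : v ∈ Subalgebra.center F Q :=
        Subalgebra.mem_center_iff.2 (fun x => (hall x).symm)
      have hbot := Algebra.IsCentral.out (K := F) (D := Q) hcen
      rw [Algebra.mem_bot] at hbot
      exact hbot
    obtain ⟨x, hx⟩ := hvc
    set w : Q := v * x - x * v with hw_def
    have hw0 : w ≠ 0 := sub_ne_zero_of_ne hx
    refine ⟨w, hw0, ?_, ?_⟩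
    · have expand : v * (v * x - x * v) + (v * x - x * v) * v
          = (v * v) * x - x * (v * v) := by noncomm_ring
      rw [hw_def, expand, hvv, Algebra.commutes, sub_self]
    · intro γ δ h
      have hkk : (algebraMap F Q γ + algebraMap F Q δ * v)
          * (algebraMap F Q γ - algebraMap F Q δ * v) = (γ * γ - δ * δ * b) • (1:Q) := by
        rw [hsmul1 γ, ← Algebra.smul_def]
        simp only [mul_add, add_mul, sub_mul, mul_sub, smul_mul_assoc, mul_smul_comm,
          one_mul, mul_one, hvv', smul_smul]
        match_scalars <;> ring
      have h0 : w * ((γ * γ - δ * δ * b) • (1:Q)) = 0 := by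
        rw [← hkk, ← mul_assoc, h, zero_mul]
      rw [mul_smul_comm, mul_one] at h0
      have hcoef : γ * γ - δ * δ * b = 0 := by
        rcases smul_eq_zero.mp h0 with h' | h'
        · exact h'
        · exact absurd h' hw0
      by_cases hδ : δ = 0
      · subst hδ
        refine ⟨?_, rfl⟩
        have hγγ : γ * γ = 0 := by linear_combination hcoef
        exact mul_self_eq_zero.mp hγγ
      · exfalso
        apply hsq
        refine ⟨γ * δ⁻¹, ?_⟩
        field_simp
        linear_combination hcoef



lemma main_ne_two {F Q : Type*} [Field F] [Ring Q] [Algebra F Q]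
    [Algebra.IsCentral F Q] [IsSimpleRing Q]
    (hdim : Module.finrank F Q = 4)
    (v : Q) (hv : v ∉ Set.range (algebraMap F Q))
    (b : F) (hb : b ≠ 0) (hvv : v * v = algebraMap F Q b)
    (h2 : (2 : F) ≠ 0) :
    ∃ (u : Q) (a : F), 1 + 4 * a ≠ 0 ∧
      u * v = v * (1 - u) ∧
      u * u - u = algebraMap F Q a ∧
      LinearIndependent F ![1, u, v, u * v] ∧
      Submodule.span F {(1 : Q), u, v, u * v} = ⊤ := by
  have hsmul1 : ∀ c : F, algebraMap F Q c = c • (1 : Q) := fun c =>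
    Algebra.algebraMap_eq_smul_one c
  have hvv' : v * v = b • (1 : Q) := by rw [hvv, hsmul1]
  obtain ⟨w, hw0, hanti, hann⟩ := exists_w h2 v hv b hb hvv
  set u : Q := (2:F)⁻¹ • ((1:Q) + w) with hu_def
  have h2Q : (2:Q) = algebraMap F Q 2 := (map_ofNat (algebraMap F Q) 2).symm
  have hu2 : (2:Q) * u - 1 = w := by
    rw [hu_def, h2Q, mul_smul_comm, ← Algebra.smul_def, smul_smul,
      inv_mul_cancel₀ h2, one_smul, add_sub_cancel_left]
  have hwv : w * v = -(v * w) := eq_neg_of_add_eq_zero_right hanti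
  have huv_half : u * v = (2:F)⁻¹ • (v + w * v) := by
    rw [hu_def, smul_mul_assoc, add_mul, one_mul]
  have hvu_half : v * u = (2:F)⁻¹ • (v + v * w) := by
    rw [hu_def, mul_smul_comm, mul_add, mul_one]
  have hrel : u * v = v * (1 - u) := by
    rw [mul_sub, mul_one, hvu_half, huv_half, hwv]
    match_scalars <;> field_simp <;> norm_num
  have hfac : ∀ β δ : F,
      ((2 : Q) * u - 1) * (algebraMap F Q β + algebraMap F Q δ * v) = 0 → β = 0 ∧ δ = 0 := by
    intro β δ h
    rw [hu2] at h
    exact hann β δ h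
  have hindep : LinearIndependent F ![1, u, v, u * v] :=
    indep_of_rel v hv b hb hvv u hrel hfac
  have hspan : Submodule.span F {(1 : Q), u, v, u * v} = ⊤ :=
    span_top_of_indep hdim 1 u v (u*v) hindep
  -- w * w is central
  have hcu : (w*w) * u = u * (w*w) := by
    have h' : (w*w) * ((1:Q)+w) = ((1:Q)+w) * (w*w) := by noncomm_ring
    rw [hu_def, mul_smul_comm, smul_mul_assoc, h']
  have hcv : (w*w) * v = v * (w*w) := by
    calc w*w*v = w*(w*v) := by rw [mul_assoc]
    _ = -(w*(v*w)) := by rw [hwv, mul_neg]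
    _ = -((w*v)*w) := by rw [mul_assoc]
    _ = (v*w)*w := by rw [hwv, neg_mul, neg_neg]
    _ = v*(w*w) := by rw [mul_assoc]
  have hcuv : (w*w) * (u*v) = (u*v) * (w*w) := by
    calc (w*w)*(u*v) = ((w*w)*u)*v := (mul_assoc _ _ _).symm
    _ = (u*(w*w))*v := by rw [hcu]
    _ = u*((w*w)*v) := by rw [mul_assoc]
    _ = u*(v*(w*w)) := by rw [hcv]
    _ = (u*v)*(w*w) := (mul_assoc _ _ _).symm
  obtain ⟨s, hws⟩ : ∃ s : F, w * w = algebraMap F Q s := by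
    apply central_of_commutes _ hspan (w*w)
    intro t ht
    simp only [Set.mem_insert_iff, Set.mem_singleton_iff] at ht
    rcases ht with rfl | rfl | rfl | rfl
    · rw [mul_one, one_mul]
    · exact hcu
    · exact hcv
    · exact hcuv
  have hs0 : s ≠ 0 := by
    intro hs
    subst hs
    rw [map_zero] at hws
    -- span {w, v*w} is a nonzero proper two-sided ideal
    set M : Submodule F Q := Submodule.span F {w, v * w} with hM_def
    have hwM : w ∈ M := Submodule.subset_span (by simp)
    have hvwM : v * w ∈ M := Submodule.subset_span (by simp)
    have i1 : u * w = (2:F)⁻¹ • w := by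
      rw [hu_def, smul_mul_assoc, add_mul, one_mul, hws, add_zero]
    have i2 : w * u = (2:F)⁻¹ • w := by
      rw [hu_def, mul_smul_comm, mul_add, mul_one, hws, add_zero]
    have i3 : v * (v * w) = b • w := by
      rw [← mul_assoc, hvv', smul_mul_assoc, one_mul]
    have i7 : w * (v * w) = 0 := by
      rw [← mul_assoc, hwv, neg_mul, mul_assoc, hws, mul_zero, neg_zero]
    have i6 : (v * w) * w = 0 := by rw [mul_assoc, hws, mul_zero]
    have i5 : (v * w) * v = (-b) • w := by
      rw [mul_assoc, hwv, mul_neg, i3, neg_smul]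
    have i8' : u * (v * w) = (2:F)⁻¹ • (v * w) := by
      rw [hu_def, smul_mul_assoc, add_mul, one_mul, i7, add_zero]
    have i8 : (u * v) * w = (2:F)⁻¹ • (v * w) := by
      rw [mul_assoc, i8']
    have i9 : w * (u * v) = (-(2:F)⁻¹) • (v * w) := by
      rw [← mul_assoc, i2, smul_mul_assoc, hwv, smul_neg, ← neg_smul]
    have i10 : (v * w) * u = (2:F)⁻¹ • (v * w) := by
      rw [mul_assoc, i2, mul_smul_comm]
    have i11 : (v * w) * (u * v) = ((2:F)⁻¹ * (-b)) • w := by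
      rw [← mul_assoc, i10, smul_mul_assoc, i5, smul_smul]
    have i12 : (u * v) * (v * w) = ((2:F)⁻¹ * b) • w := by
      rw [mul_assoc, i3, mul_smul_comm, i1, smul_smul, mul_comm b]
    have hgen : ∀ t ∈ ({1, u, v, u*v} : Set Q), ∀ z ∈ M, t * z ∈ M ∧ z * t ∈ M := by
      intro t ht z hz
      induction hz using Submodule.span_induction with
      | mem m hm =>
        simp only [Set.mem_insert_iff, Set.mem_singleton_iff] at ht hm
        rcases hm with rfl | rfl
        · rcases ht with rfl | rfl | rfl | rfl
          · constructor <;> simpa using hwM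
          · exact ⟨i1 ▸ M.smul_mem _ hwM, i2 ▸ M.smul_mem _ hwM⟩
          · refine ⟨hvwM, ?_⟩
            rw [hwv]
            exact M.neg_mem hvwM
          · exact ⟨i8 ▸ M.smul_mem _ hvwM, i9 ▸ M.smul_mem _ hvwM⟩
        · rcases ht with rfl | rfl | rfl | rfl
          · constructor <;> simpa using hvwM
          · exact ⟨by rw [i8']; exact M.smul_mem _ hvwM,
              by rw [i10]; exact M.smul_mem _ hvwM⟩
          · exact ⟨by rw [i3]; exact M.smul_mem _ hwM,
              by rw [i5]; exact M.smul_mem _ hwM⟩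
          · exact ⟨by rw [i12]; exact M.smul_mem _ hwM,
              by rw [i11]; exact M.smul_mem _ hwM⟩
      | zero => constructor <;> simpa using M.zero_mem
      | add y z hy hz ihy ihz =>
        obtain ⟨a1, a2⟩ := ihy
        obtain ⟨b1, b2⟩ := ihz
        exact ⟨by rw [mul_add]; exact M.add_mem a1 b1, by rw [add_mul]; exact M.add_mem a2 b2⟩
      | smul c y hy ih =>
        obtain ⟨a1, a2⟩ := ih
        exact ⟨by rw [mul_smul_comm]; exact M.smul_mem c a1,
          by rw [smul_mul_assoc]; exact M.smul_mem c a2⟩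
    have hclosed : ∀ q z : Q, z ∈ M → q * z ∈ M ∧ z * q ∈ M := by
      intro q z hz
      have hq : q ∈ Submodule.span F ({1, u, v, u*v} : Set Q) := by rw [hspan]; trivial
      induction hq using Submodule.span_induction with
      | mem t ht => exact hgen t ht z hz
      | zero => exact ⟨by rw [zero_mul]; exact M.zero_mem, by rw [mul_zero]; exact M.zero_mem⟩
      | add y t hy ht ihy iht =>
        obtain ⟨a1, a2⟩ := ihy
        obtain ⟨b1, b2⟩ := iht
        exact ⟨by rw [add_mul]; exact M.add_mem a1 b1, by rw [mul_add]; exact M.add_mem a2 b2⟩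
      | smul c y hy ih =>
        obtain ⟨a1, a2⟩ := ih
        exact ⟨by rw [smul_mul_assoc]; exact M.smul_mem c a1,
          by rw [mul_smul_comm]; exact M.smul_mem c a2⟩
    rcases submodule_ideal_bot_or_top M (fun q z hz => (hclosed q z hz).1)
      (fun q z hz => (hclosed q z hz).2) with hbot | htop
    · rw [hbot] at hwM
      exact hw0 (by simpa using hwM)
    · have h1M : (1:Q) ∈ M := by rw [htop]; trivial
      obtain ⟨c, d, hcd⟩ := Submodule.mem_span_pair.mp h1M
      apply hw0
      calc w = 1 * w := (one_mul w).symm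
      _ = (c • w + d • (v * w)) * w := by rw [hcd]
      _ = c • (w * w) + d • ((v * w) * w) := by rw [add_mul, smul_mul_assoc, smul_mul_assoc]
      _ = 0 := by rw [hws, i6, smul_zero, smul_zero, add_zero]
  have h4 : (4:F) ≠ 0 := by
    have h44 : (4:F) = 2*2 := by norm_num
    rw [h44]
    exact mul_ne_zero h2 h2
  refine ⟨u, (s - 1)/4, ?_, hrel, ?_, hindep, hspan⟩
  · have heq : 1 + 4 * ((s-1)/4) = s := by field_simp; ring
    rw [heq]
    exact hs0
  · have hww' : w * w = s • (1:Q) := by rw [hws, hsmul1]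
    have hexp : ((1:Q) + w) * ((1:Q) + w) = (1:Q) + w + w + s • (1:Q) := by
      rw [show ((1:Q)+w)*((1:Q)+w) = 1 + w + w + w*w from by noncomm_ring, hww']
    rw [hsmul1, hu_def]
    rw [smul_mul_assoc, mul_smul_comm, smul_smul, hexp]
    match_scalars <;> field_simp <;> ring

lemma solve_from_y {F Q : Type*} [Field F] [Ring Q] [Algebra F Q] [IsSimpleRing Q]
    (hdim : Module.finrank F Q = 4)
    (y : Q) (hy0 : y ≠ 0) (hyy : y * y = 0)
    (hyQy : ∀ a : Q, ∃ κ : F, y * a * y = κ • y)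
    (n : Q) (hn0 : n ≠ 0) (hnn : n * n = 0) :
    ∃ m : Q, n * m + m * n = 1 := by
  have hfd : FiniteDimensional F Q := FiniteDimensional.of_finrank_pos (by omega)
  obtain ⟨c0, hc0⟩ := exists_sandwich_ne_zero F y hy0
  obtain ⟨κ0, hκ0eq⟩ := hyQy c0
  have hκ0 : κ0 ≠ 0 := fun h => hc0 (by rw [hκ0eq, h, zero_smul])
  obtain ⟨c, hc_def⟩ : ∃ c' : Q, c' = κ0⁻¹ • c0 := ⟨_, rfl⟩
  have hycy : y * c * y = y := by
    rw [hc_def, mul_smul_comm, smul_mul_assoc, hκ0eq, smul_smul,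
      inv_mul_cancel₀ hκ0, one_smul]
  obtain ⟨g, hg_def⟩ : ∃ g' : Q, g' = y * c := ⟨_, rfl⟩
  have hgy : g * y = y := by rw [hg_def]; exact hycy
  have hyg : y * g = 0 := by rw [hg_def, ← mul_assoc, hyy, zero_mul]
  have hgg : g * g = g := by
    nth_rewrite 2 [hg_def]
    rw [← mul_assoc, hgy, ← hg_def]
  have hg0 : g ≠ 0 := fun h => hy0 (by rw [← hgy, h, zero_mul])
  have hgf : g * (1 - g) = 0 := by rw [mul_sub, mul_one, hgg, sub_self]
  obtain ⟨q, hq_def⟩ : ∃ q' : Q, q' = (1 - g) * (c * g) := ⟨_, rfl⟩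
  have hqg : q * g = q := by
    rw [hq_def, mul_assoc, mul_assoc, hgg]
  have hgq : g * q = 0 := by
    rw [hq_def, ← mul_assoc, hgf, zero_mul]
  have hyq : y * q = g := by
    have h1 : y * (1 - g) = y := by rw [mul_sub, mul_one, hyg, sub_zero]
    rw [hq_def, ← mul_assoc, h1, ← mul_assoc, ← hg_def, hgg]
  have hqf : q * (1 - g) = 0 := by rw [mul_sub, mul_one, hqg, sub_self]
  have hqq : q * q = 0 := by
    nth_rewrite 2 [hq_def]
    rw [← mul_assoc, hqf, zero_mul]
  have hq0 : q ≠ 0 := fun h => hg0 (by rw [← hyq, h, mul_zero])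
  obtain ⟨t, ht_def⟩ : ∃ t' : Q, t' = q * y := ⟨_, rfl⟩
  have htt : t * t = t := by
    nth_rewrite 2 [ht_def]
    rw [ht_def, mul_assoc, ← mul_assoc y q, hyq, hgy, ← ht_def]
  have hgt : g * t = 0 := by rw [ht_def, ← mul_assoc, hgq, zero_mul]
  have htg : t * g = 0 := by rw [ht_def, mul_assoc, hyg, mul_zero]
  have hyt : y * t = y := by rw [ht_def, ← mul_assoc, hyq, hgy]
  have hty : t * y = 0 := by rw [ht_def, mul_assoc, hyy, mul_zero]
  have hqt : q * t = 0 := by rw [ht_def, ← mul_assoc, hqq, zero_mul]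
  have htq : t * q = q := by rw [ht_def, mul_assoc, hyq, hqg]
  have hqy : q * y = t := ht_def.symm
  have ht0 : t ≠ 0 := by
    intro h
    apply hq0
    rw [← htq, h, zero_mul]
  -- assoc versions
  have Agy : ∀ z : Q, g * (y * z) = y * z := fun z => by rw [← mul_assoc, hgy]
  have Ayg : ∀ z : Q, y * (g * z) = 0 := fun z => by rw [← mul_assoc, hyg, zero_mul]
  have Agg : ∀ z : Q, g * (g * z) = g * z := fun z => by rw [← mul_assoc, hgg]
  have Agq : ∀ z : Q, g * (q * z) = 0 := fun z => by rw [← mul_assoc, hgq, zero_mul]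
  have Aqg : ∀ z : Q, q * (g * z) = q * z := fun z => by rw [← mul_assoc, hqg]
  have Ayq : ∀ z : Q, y * (q * z) = g * z := fun z => by rw [← mul_assoc, hyq]
  have Aqq : ∀ z : Q, q * (q * z) = 0 := fun z => by rw [← mul_assoc, hqq, zero_mul]
  have Ayy : ∀ z : Q, y * (y * z) = 0 := fun z => by rw [← mul_assoc, hyy, zero_mul]
  have Att : ∀ z : Q, t * (t * z) = t * z := fun z => by rw [← mul_assoc, htt]
  have Agt : ∀ z : Q, g * (t * z) = 0 := fun z => by rw [← mul_assoc, hgt, zero_mul]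
  have Atg : ∀ z : Q, t * (g * z) = 0 := fun z => by rw [← mul_assoc, htg, zero_mul]
  have Ayt : ∀ z : Q, y * (t * z) = y * z := fun z => by rw [← mul_assoc, hyt]
  have Aty : ∀ z : Q, t * (y * z) = 0 := fun z => by rw [← mul_assoc, hty, zero_mul]
  have Aqt : ∀ z : Q, q * (t * z) = 0 := fun z => by rw [← mul_assoc, hqt, zero_mul]
  have Atq : ∀ z : Q, t * (q * z) = q * z := fun z => by rw [← mul_assoc, htq]
  have Aqy : ∀ z : Q, q * (y * z) = t * z := fun z => by rw [← mul_assoc, hqy]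
  -- (g, y, q, t) is linearly independent, hence a basis
  have hindep4 : LinearIndependent F ![g, y, q, t] := by
    rw [Fintype.linearIndependent_iff]
    intro k hk
    rw [Fin.sum_univ_four] at hk
    simp only [Matrix.cons_val_zero, Matrix.cons_val_one, Matrix.head_cons,
      Matrix.cons_val_two, Matrix.cons_val_three, Matrix.tail_cons] at hk
    have e0 : k 0 = 0 := by
      have h := congrArg (fun z => g * z * g) hk
      simp only [mul_add, add_mul, mul_smul_comm, smul_mul_assoc, mul_zero, zero_mul,
        mul_assoc, Agy, Ayg, Agg, Agq, Aqg, Ayq, Aqq, Ayy, Att, Agt, Atg, Ayt, Aty,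
        Aqt, Atq, Aqy, hgy, hyg, hgg, hgq, hqg, hyq, hqq, hyy, htt, hgt, htg, hyt,
        hty, hqt, htq, hqy, smul_zero, add_zero, zero_add] at h
      rcases smul_eq_zero.mp h with h' | h'
      · exact h'
      · exact absurd h' hg0
    have e1 : k 1 = 0 := by
      have h := congrArg (fun z => g * z * t) hk
      simp only [mul_add, add_mul, mul_smul_comm, smul_mul_assoc, mul_zero, zero_mul,
        mul_assoc, Agy, Ayg, Agg, Agq, Aqg, Ayq, Aqq, Ayy, Att, Agt, Atg, Ayt, Aty,
        Aqt, Atq, Aqy, hgy, hyg, hgg, hgq, hqg, hyq, hqq, hyy, htt, hgt, htg, hyt,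
        hty, hqt, htq, hqy, smul_zero, add_zero, zero_add] at h
      rcases smul_eq_zero.mp h with h' | h'
      · exact h'
      · exact absurd h' hy0
    have e2 : k 2 = 0 := by
      have h := congrArg (fun z => t * z * g) hk
      simp only [mul_add, add_mul, mul_smul_comm, smul_mul_assoc, mul_zero, zero_mul,
        mul_assoc, Agy, Ayg, Agg, Agq, Aqg, Ayq, Aqq, Ayy, Att, Agt, Atg, Ayt, Aty,
        Aqt, Atq, Aqy, hgy, hyg, hgg, hgq, hqg, hyq, hqq, hyy, htt, hgt, htg, hyt,
        hty, hqt, htq, hqy, smul_zero, add_zero, zero_add] at h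
      rcases smul_eq_zero.mp h with h' | h'
      · exact h'
      · exact absurd h' hq0
    have e3 : k 3 = 0 := by
      have h := congrArg (fun z => t * z * t) hk
      simp only [mul_add, add_mul, mul_smul_comm, smul_mul_assoc, mul_zero, zero_mul,
        mul_assoc, Agy, Ayg, Agg, Agq, Aqg, Ayq, Aqq, Ayy, Att, Agt, Atg, Ayt, Aty,
        Aqt, Atq, Aqy, hgy, hyg, hgg, hgq, hqg, hyq, hqq, hyy, htt, hgt, htg, hyt,
        hty, hqt, htq, hqy, smul_zero, add_zero, zero_add] at h
      rcases smul_eq_zero.mp h with h' | h'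
      · exact h'
      · exact absurd h' ht0
    intro i
    fin_cases i
    · exact e0
    · exact e1
    · exact e2
    · exact e3
  have hspan4 : Submodule.span F (Set.range ![g, y, q, t]) = ⊤ := by
    apply Submodule.eq_top_of_finrank_eq
    rw [finrank_span_eq_card hindep4, hdim]
    simp
  have hcoords : ∀ x : Q, ∃ k : Fin 4 → F,
      k 0 • g + k 1 • y + k 2 • q + k 3 • t = x := by
    intro x
    have hx : x ∈ Submodule.span F (Set.range ![g, y, q, t]) := by rw [hspan4]; trivial
    obtain ⟨k, hk⟩ := (Submodule.mem_span_range_iff_exists_fun F).mp hx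
    refine ⟨k, ?_⟩
    rw [← hk, Fin.sum_univ_four]
    simp only [Matrix.cons_val_zero, Matrix.cons_val_one, Matrix.head_cons,
      Matrix.cons_val_two, Matrix.cons_val_three, Matrix.tail_cons]
  have hcoeff : ∀ c0' c1 c2 c3 : F, c0' • g + c1 • y + c2 • q + c3 • t = 0 →
      c0' = 0 ∧ c1 = 0 ∧ c2 = 0 ∧ c3 = 0 := by
    intro c0' c1 c2 c3 h
    have hz := Fintype.linearIndependent_iff.mp hindep4 ![c0', c1, c2, c3] (by
      rw [Fin.sum_univ_four]
      simpa using h)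
    exact ⟨hz 0, hz 1, hz 2, hz 3⟩
  -- 1 = g + t
  have hone : (1 : Q) = g + t := by
    obtain ⟨k, hk⟩ := hcoords 1
    have hyone : k 2 • g + k 3 • y = y := by
      have h := congrArg (fun z => y * z) hk
      simpa only [mul_add, mul_smul_comm, hyg, hyy, hyq, hyt, smul_zero, zero_add,
        add_zero, mul_one] using h
    have hgone : k 0 • g + k 1 • y = g := by
      have h := congrArg (fun z => g * z) hk
      simpa only [mul_add, mul_smul_comm, hgg, hgy, hgq, hgt, smul_zero, zero_add,
        add_zero, mul_one] using h
    have h1 : k 2 • g + (k 3 - 1) • y + (0:F) • q + (0:F) • t = 0 := by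
      rw [sub_smul, one_smul, zero_smul, zero_smul, add_zero, add_zero]
      calc k 2 • g + (k 3 • y - y) = (k 2 • g + k 3 • y) - y := by abel
      _ = 0 := by rw [hyone, sub_self]
    have h2 : (k 0 - 1) • g + k 1 • y + (0:F) • q + (0:F) • t = 0 := by
      rw [sub_smul, one_smul, zero_smul, zero_smul, add_zero, add_zero]
      calc (k 0 • g - g) + k 1 • y = (k 0 • g + k 1 • y) - g := by abel
      _ = 0 := by rw [hgone, sub_self]
    obtain ⟨hk2, hk31, -, -⟩ := hcoeff _ _ _ _ h1
    obtain ⟨hk01, hk1, -, -⟩ := hcoeff _ _ _ _ h2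
    have hk0 : k 0 = 1 := by linear_combination hk01
    have hk3 : k 3 = 1 := by linear_combination hk31
    rw [← hk, hk0, hk1, hk2, hk3, one_smul, one_smul, zero_smul, zero_smul]
    abel
  -- coordinates of n
  obtain ⟨κ, hκ⟩ := hcoords n
  have hgn : g * n = κ 0 • g + κ 1 • y := by
    have h := congrArg (fun z => g * z) hκ
    simpa only [mul_add, mul_smul_comm, hgg, hgy, hgq, hgt, smul_zero, zero_add,
      add_zero] using h.symm
  have hng : n * g = κ 0 • g + κ 2 • q := by
    have h := congrArg (fun z => z * g) hκ
    simpa only [add_mul, smul_mul_assoc, hgg, hyg, hqg, htg, smul_zero, zero_add,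
      add_zero] using h.symm
  have htn : t * n = κ 2 • q + κ 3 • t := by
    have h := congrArg (fun z => t * z) hκ
    simpa only [mul_add, mul_smul_comm, htg, hty, htq, htt, smul_zero, zero_add,
      add_zero] using h.symm
  have hnt : n * t = κ 1 • y + κ 3 • t := by
    have h := congrArg (fun z => z * t) hκ
    simpa only [add_mul, smul_mul_assoc, hgt, hyt, hqt, htt, smul_zero, zero_add,
      add_zero] using h.symm
  have hny : n * y = κ 0 • y + κ 2 • t := by
    have h := congrArg (fun z => z * y) hκ
    simpa only [add_mul, smul_mul_assoc, hgy, hyy, hqy, hty, smul_zero, zero_add,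
      add_zero] using h.symm
  have hyn : y * n = κ 2 • g + κ 3 • y := by
    have h := congrArg (fun z => y * z) hκ
    simpa only [mul_add, mul_smul_comm, hyg, hyy, hyq, hyt, smul_zero, zero_add,
      add_zero] using h.symm
  have hnq : n * q = κ 1 • g + κ 3 • q := by
    have h := congrArg (fun z => z * q) hκ
    simpa only [add_mul, smul_mul_assoc, hgq, hyq, hqq, htq, smul_zero, zero_add,
      add_zero] using h.symm
  have hqn : q * n = κ 0 • q + κ 1 • t := by
    have h := congrArg (fun z => q * z) hκ
    simpa only [mul_add, mul_smul_comm, hqg, hqy, hqq, hqt, smul_zero, zero_add,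
      add_zero] using h.symm
  -- relations from n * n = 0
  have hrel_y : κ 1 * (κ 0 + κ 3) = 0 := by
    have h : g * n * (n * t) = 0 := by
      rw [← mul_assoc, mul_assoc g n n, hnn, mul_zero, zero_mul]
    rw [hgn, hnt] at h
    simp only [add_mul, mul_add, smul_mul_assoc, mul_smul_comm, smul_smul,
      hgy, hyy, hgt, hyt, smul_zero, add_zero, zero_add] at h
    -- h : (κ 0 * κ 1) • y + (κ 1 * κ 3) • y = 0  (shapes may vary)
    have h' : (κ 0 * κ 1 + κ 1 * κ 3) • y = 0 := by
      rw [← h]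
      module
    rcases smul_eq_zero.mp h' with h'' | h''
    · linear_combination h''
    · exact absurd h'' hy0
  have hrel_q : κ 2 * (κ 0 + κ 3) = 0 := by
    have h : t * n * (n * g) = 0 := by
      rw [← mul_assoc, mul_assoc t n n, hnn, mul_zero, zero_mul]
    rw [htn, hng] at h
    simp only [add_mul, mul_add, smul_mul_assoc, mul_smul_comm, smul_smul,
      hqg, hqq, htg, htq, smul_zero, add_zero, zero_add] at h
    have h' : (κ 2 * κ 0 + κ 3 * κ 2) • q = 0 := by
      rw [← h]
      module
    rcases smul_eq_zero.mp h' with h'' | h''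
    · linear_combination h''
    · exact absurd h'' hq0
  have hrel_g : κ 0 * κ 0 + κ 1 * κ 2 = 0 := by
    have h : g * n * (n * g) = 0 := by
      rw [← mul_assoc, mul_assoc g n n, hnn, mul_zero, zero_mul]
    rw [hgn, hng] at h
    simp only [add_mul, mul_add, smul_mul_assoc, mul_smul_comm, smul_smul,
      hgg, hgq, hyg, hyq, smul_zero, add_zero, zero_add] at h
    have h' : (κ 0 * κ 0 + κ 1 * κ 2) • g = 0 := by
      rw [← h]
      module
    rcases smul_eq_zero.mp h' with h'' | h''
    · exact h''
    · exact absurd h'' hg0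
  have hrel_t : κ 3 * κ 3 + κ 2 * κ 1 = 0 := by
    have h : t * n * (n * t) = 0 := by
      rw [← mul_assoc, mul_assoc t n n, hnn, mul_zero, zero_mul]
    rw [htn, hnt] at h
    simp only [add_mul, mul_add, smul_mul_assoc, mul_smul_comm, smul_smul,
      hqy, hqt, hty, htt, smul_zero, add_zero, zero_add] at h
    have h' : (κ 2 * κ 1 + κ 3 * κ 3) • t = 0 := by
      rw [← h]
      module
    rcases smul_eq_zero.mp h' with h'' | h''
    · linear_combination h''
    · exact absurd h'' ht0
  -- now solve
  by_cases hκ1 : κ 1 ≠ 0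
  · refine ⟨(κ 1)⁻¹ • q, ?_⟩
    have hsum : κ 0 + κ 3 = 0 := by
      rcases mul_eq_zero.mp hrel_y with h' | h'
      · exact absurd h' hκ1
      · exact h'
    rw [mul_smul_comm, smul_mul_assoc, hnq, hqn]
    rw [hone]
    have : κ 3 = -κ 0 := by linear_combination hsum
    rw [this]
    match_scalars <;> field_simp <;> ring
  · by_cases hκ2 : κ 2 ≠ 0
    · refine ⟨(κ 2)⁻¹ • y, ?_⟩
      have hsum : κ 0 + κ 3 = 0 := by
        rcases mul_eq_zero.mp hrel_q with h' | h'
        · exact absurd h' hκ2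
        · exact h'
      rw [mul_smul_comm, smul_mul_assoc, hny, hyn]
      rw [hone]
      have : κ 3 = -κ 0 := by linear_combination hsum
      rw [this]
      match_scalars <;> field_simp <;> ring
    · exfalso
      push_neg at hκ1 hκ2
      apply hn0
      rw [← hκ, hκ1, hκ2, zero_smul, zero_smul]
      have h0 : κ 0 = 0 := by
        have := hrel_g
        rw [hκ1, hκ2] at this
        have : κ 0 * κ 0 = 0 := by linear_combination this
        exact mul_self_eq_zero.mp this
      have h3 : κ 3 = 0 := by
        have := hrel_t
        rw [hκ1, hκ2] at this
        have : κ 3 * κ 3 = 0 := by linear_combination this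
        exact mul_self_eq_zero.mp this
      rw [h0, h3, zero_smul, zero_smul]
      simp

lemma range_two {Q : Type*} (a b : Q) : Set.range ![a, b] = {a, b} := by
  ext x
  constructor
  · rintro ⟨i, rfl⟩
    fin_cases i <;> simp
  · intro hx
    rcases hx with rfl | rfl
    · exact ⟨0, rfl⟩
    · exact ⟨1, rfl⟩

lemma solve_m {F Q : Type*} [Field F] [Ring Q] [Algebra F Q] [IsSimpleRing Q]
    [Algebra.IsCentral F Q]
    (hdim : Module.finrank F Q = 4) (h2Q : (2 : Q) = 0)
    (n : Q) (hn0 : n ≠ 0) (hnn : n * n = 0) (hn : n ∉ Set.range (algebraMap F Q)) :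
    ∃ m : Q, n * m + m * n = 1 := by
  have hfd : FiniteDimensional F Q := FiniteDimensional.of_finrank_pos (by omega)
  have hdouble : ∀ z : Q, z + z = 0 := fun z => by
    rw [← two_mul, h2Q, zero_mul]
  set d : Q →ₗ[F] Q := LinearMap.mulLeft F n + LinearMap.mulRight F n with hd_def
  have hd : ∀ x : Q, d x = n * x + x * n := fun x => by
    simp [hd_def, LinearMap.add_apply, LinearMap.mulLeft_apply, LinearMap.mulRight_apply]
  have hdd : ∀ x : Q, d (d x) = 0 := by
    intro x
    rw [hd, hd]
    have expand : n * (n * x + x * n) + (n * x + x * n) * n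
        = (n * n) * x + x * (n * n) + (n * x * n + n * x * n) := by noncomm_ring
    rw [expand, hnn, zero_mul, mul_zero, hdouble (n * x * n)]
    simp
  have hrange_le : LinearMap.range d ≤ LinearMap.ker d := by
    rintro z ⟨x, rfl⟩
    exact LinearMap.mem_ker.mpr (hdd x)
  have hd1 : d 1 = 0 := by rw [hd, mul_one, one_mul, hdouble]
  have hdn : d n = 0 := by rw [hd, hnn, add_zero]
  have h1n_indep : LinearIndependent F ![(1 : Q), n] := by
    rw [Fintype.linearIndependent_iff]
    intro k hk
    rw [Fin.sum_univ_two] at hk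
    simp only [Matrix.cons_val_zero, Matrix.cons_val_one, Matrix.head_cons] at hk
    obtain ⟨h0, h1⟩ := comb2_zero n hn hk
    intro i
    fin_cases i
    · exact h0
    · exact h1
  by_cases hker : ∀ z : Q, n * z + z * n = 0 → z ∈ Submodule.span F {(1 : Q), n}
  · -- ker d = span {1, n}, and range d = ker d ∋ 1
    have hker_eq : LinearMap.ker d = Submodule.span F {(1 : Q), n} := by
      apply le_antisymm
      · intro z hz
        exact hker z (by rw [← hd z]; exact LinearMap.mem_ker.mp hz)
      · rw [Submodule.span_le]
        intro z hz
        simp only [Set.mem_insert_iff, Set.mem_singleton_iff] at hz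
        rcases hz with rfl | rfl
        · exact LinearMap.mem_ker.mpr hd1
        · exact LinearMap.mem_ker.mpr hdn
    have hfr_ker : Module.finrank F (LinearMap.ker d) = 2 := by
      rw [hker_eq, ← range_two 1 n, finrank_span_eq_card h1n_indep]
      simp
    have hfr_range : Module.finrank F (LinearMap.range d) = 2 := by
      have := LinearMap.finrank_range_add_finrank_ker d
      rw [hdim, hfr_ker] at this
      omega
    have hre : LinearMap.range d = LinearMap.ker d :=
      Submodule.eq_of_le_of_finrank_le hrange_le (by rw [hfr_ker, hfr_range])
    have h1mem : (1 : Q) ∈ LinearMap.range d := by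
      rw [hre, hker_eq]
      exact Submodule.subset_span (by simp)
    obtain ⟨m, hm⟩ := h1mem
    exact ⟨m, by rw [← hd]; exact hm⟩
  · push_neg at hker
    obtain ⟨z₀, hz₀d, hz₀⟩ := hker
    have hker_ne_top : LinearMap.ker d ≠ ⊤ := by
      intro htop
      apply hn
      have hcen : n ∈ Subalgebra.center F Q := by
        rw [Subalgebra.mem_center_iff]
        intro x
        have h0 : n * x + x * n = 0 := by
          rw [← hd]
          exact LinearMap.mem_ker.mp (htop ▸ Submodule.mem_top)
        have h1 : x * n = -(n * x) := eq_neg_of_add_eq_zero_right h0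
        rw [h1, neg_eq_of_add_eq_zero_left (hdouble (n * x))]
      have hbot := Algebra.IsCentral.out (K := F) (D := Q) hcen
      rw [Algebra.mem_bot] at hbot
      exact hbot
    have hindep3 : LinearIndependent F ![(1 : Q), n, z₀] := by
      rw [Fintype.linearIndependent_iff]
      intro k hk
      rw [Fin.sum_univ_three] at hk
      simp only [Matrix.cons_val_zero, Matrix.cons_val_one, Matrix.head_cons,
        Matrix.cons_val_two, Matrix.tail_cons] at hk
      by_cases hk2 : k 2 = 0
      · rw [hk2, zero_smul, add_zero] at hk
        obtain ⟨h0, h1⟩ := comb2_zero n hn hk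
        intro i
        fin_cases i
        · exact h0
        · exact h1
        · exact hk2
      · exfalso
        apply hz₀
        have h1 : k 2 • z₀ = -(k 0 • (1 : Q) + k 1 • n) := eq_neg_of_add_eq_zero_right hk
        have h3 := congrArg (fun zz => (k 2)⁻¹ • zz) h1
        simp only [smul_smul, inv_mul_cancel₀ hk2, one_smul, smul_neg, smul_add] at h3
        rw [Submodule.mem_span_pair]
        refine ⟨-((k 2)⁻¹ * k 0), -((k 2)⁻¹ * k 1), ?_⟩
        rw [h3]
        module
    have hsple : Submodule.span F (Set.range ![(1 : Q), n, z₀]) ≤ LinearMap.ker d := by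
      rw [Submodule.span_le]
      rintro z ⟨i, rfl⟩
      fin_cases i
      · exact LinearMap.mem_ker.mpr hd1
      · exact LinearMap.mem_ker.mpr hdn
      · exact LinearMap.mem_ker.mpr (by rw [hd]; exact hz₀d)
    have h3le : 3 ≤ Module.finrank F (LinearMap.ker d) := by
      have := Submodule.finrank_mono hsple
      rw [finrank_span_eq_card hindep3] at this
      simpa using this
    have hker_le3 : Module.finrank F (LinearMap.ker d) ≤ 3 := by
      by_contra hcon
      push_neg at hcon
      have hle4 : Module.finrank F (LinearMap.ker d) ≤ 4 := hdim ▸ Submodule.finrank_le _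
      have : Module.finrank F (LinearMap.ker d) = 4 := by omega
      exact hker_ne_top (Submodule.eq_top_of_finrank_eq (by rw [this, hdim]))
    have hkr : Module.finrank F (LinearMap.ker d) = 3 := le_antisymm hker_le3 h3le
    have hrr : Module.finrank F (LinearMap.range d) = 1 := by
      have := LinearMap.finrank_range_add_finrank_ker d
      rw [hdim, hkr] at this
      omega
    obtain ⟨z₁, hz₁⟩ := exists_sandwich_ne_zero F n hn0
    set y : Q := n * z₁ * n with hy_def
    have hy0 : y ≠ 0 := hz₁
    have hmemr : ∀ x : Q, n * x * n ∈ LinearMap.range d := by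
      intro x
      refine ⟨x * n, ?_⟩
      rw [hd, mul_assoc x n n, hnn, mul_zero, add_zero, ← mul_assoc]
    have hrange_eq : LinearMap.range d = Submodule.span F {y} := by
      symm
      apply Submodule.eq_of_le_of_finrank_le
      · rw [Submodule.span_le, Set.singleton_subset_iff]
        exact hmemr z₁
      · rw [hrr, finrank_span_singleton hy0]
    have hnxn : ∀ x : Q, ∃ μ : F, n * x * n = μ • y := by
      intro x
      have hmem := hmemr x
      rw [hrange_eq] at hmem
      obtain ⟨μ, hμ⟩ := Submodule.mem_span_singleton.mp hmem
      exact ⟨μ, hμ.symm⟩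
    have hyy : y * y = 0 := by
      have e : y * y = n * z₁ * ((n * n) * (z₁ * n)) := by rw [hy_def]; noncomm_ring
      rw [e, hnn, zero_mul, mul_zero]
    have hyQy : ∀ a : Q, ∃ κ : F, y * a * y = κ • y := by
      intro a
      obtain ⟨μ, hμ⟩ := hnxn (z₁ * (n * a * n) * z₁)
      refine ⟨μ, ?_⟩
      calc y * a * y = n * (z₁ * (n * a * n) * z₁) * n := by rw [hy_def]; noncomm_ring
      _ = μ • y := hμ
    exact solve_from_y hdim y hy0 hyy hyQy n hn0 hnn

lemma main_char_two {F Q : Type*} [Field F] [Ring Q] [Algebra F Q]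
    [Algebra.IsCentral F Q] [IsSimpleRing Q]
    (hdim : Module.finrank F Q = 4)
    (v : Q) (hv : v ∉ Set.range (algebraMap F Q))
    (b : F) (hb : b ≠ 0) (hvv : v * v = algebraMap F Q b)
    (h2F : (2 : F) = 0) :
    ∃ (u : Q) (a : F), 1 + 4 * a ≠ 0 ∧
      u * v = v * (1 - u) ∧
      u * u - u = algebraMap F Q a ∧
      LinearIndependent F ![1, u, v, u * v] ∧
      Submodule.span F {(1 : Q), u, v, u * v} = ⊤ := by
  have hsmul1 : ∀ c : F, algebraMap F Q c = c • (1 : Q) := fun c =>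
    Algebra.algebraMap_eq_smul_one c
  have h2Q : (2 : Q) = 0 := by
    rw [show (2 : Q) = algebraMap F Q 2 from (map_ofNat (algebraMap F Q) 2).symm, h2F,
      map_zero]
  have hdouble : ∀ z : Q, z + z = 0 := fun z => by rw [← two_mul, h2Q, zero_mul]
  have hnegQ : ∀ z : Q, -z = z := fun z => neg_eq_of_add_eq_zero_left (hdouble z)
  -- construct u with u*v + v*u = v
  obtain ⟨u, huv⟩ : ∃ u : Q, u * v + v * u = v := by
    by_cases hsq : ∃ β : F, β * β = b
    · obtain ⟨β, hβ⟩ := hsq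
      obtain ⟨n, hn_def⟩ : ∃ n' : Q, n' = v - algebraMap F Q β := ⟨_, rfl⟩
      set B : Q := algebraMap F Q β with hB_def
      have hv_eq : v = n + B := by rw [hn_def]; abel
      have hn0 : n ≠ 0 := by
        rw [hn_def]
        exact sub_ne_zero_of_ne (fun h => hv ⟨β, h.symm⟩)
      have hBB : B * B = algebraMap F Q b := by rw [hB_def, ← map_mul, hβ]
      have hvB : v * B = B * v := by rw [hB_def, ← Algebra.commutes]
      have hnn : n * n = 0 := by
        have e : n * n = v * v - v * B - B * v + B * B := by rw [hn_def]; noncomm_ring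
        rw [e, hvv, hBB, hvB]
        have e2 : (algebraMap F Q) b - B * v - B * v + (algebraMap F Q) b
            = ((algebraMap F Q) b + (algebraMap F Q) b) - (B * v + B * v) := by abel
        rw [e2, hdouble, hdouble, sub_zero]
      have hnR : n ∉ Set.range (algebraMap F Q) := by
        rintro ⟨c, hc⟩
        apply hv
        refine ⟨c + β, ?_⟩
        rw [map_add, hc, hn_def]
        abel
      obtain ⟨m, hm⟩ := solve_m hdim h2Q n hn0 hnn hnR
      refine ⟨B * m + m * n, ?_⟩
      have hun : (B * m + m * n) * n = B * (m * n) := by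
        rw [add_mul, mul_assoc B m n, mul_assoc m n n, hnn, mul_zero, add_zero]
      have hnm_eq : n * m = 1 - m * n := eq_sub_of_add_eq hm
      have hnmn : n * (m * n) = n := by
        rw [← mul_assoc, hnm_eq, sub_mul, one_mul, mul_assoc, hnn, mul_zero, sub_zero]
      have hnu : n * (B * m + m * n) = B * (n * m) + n := by
        rw [mul_add, ← mul_assoc n B m, ← Algebra.commutes β n, ← hB_def, mul_assoc B n m,
          hnmn]
      have h1 : (B * m + m * n) * n + n * (B * m + m * n) = B + n := by
        rw [hun, hnu, ← add_assoc, ← mul_add]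
        have : m * n + n * m = 1 := by rw [add_comm]; exact hm
        rw [this, mul_one]
      have hcomm : (B * m + m * n) * B = B * (B * m + m * n) := by
        rw [hB_def, ← Algebra.commutes β]
      calc (B * m + m * n) * v + v * (B * m + m * n)
          = ((B * m + m * n) * n + n * (B * m + m * n))
            + ((B * m + m * n) * B + B * (B * m + m * n)) := by
            rw [hv_eq]; noncomm_ring
      _ = (B + n) + 0 := by rw [h1, hcomm, hdouble]
      _ = v := by rw [hv_eq, add_zero, add_comm]
    · -- b not a square
      have hvc : ∃ x : Q, ¬ (v * x = x * v) := by
        by_contra hall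
        push_neg at hall
        apply hv
        have hcen : v ∈ Subalgebra.center F Q :=
          Subalgebra.mem_center_iff.2 (fun x => (hall x).symm)
        have hbot := Algebra.IsCentral.out (K := F) (D := Q) hcen
        rw [Algebra.mem_bot] at hbot
        exact hbot
      obtain ⟨x, hx⟩ := hvc
      obtain ⟨y, hy_def⟩ : ∃ y' : Q, y' = v * x - x * v := ⟨_, rfl⟩
      have hy0 : y ≠ 0 := by rw [hy_def]; exact sub_ne_zero_of_ne hx
      have hyv : v * y = y * v := by
        have e : v * y - y * v = ((v * v) * x + x * (v * v)) - (v * x * v + v * x * v) := by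
          rw [hy_def]; noncomm_ring
        have e2 : v * y - y * v = 0 := by
          rw [e, hvv, Algebra.commutes b x, hdouble, hdouble, sub_zero]
        exact sub_eq_zero.mp e2
      have hxvvx : x * v + v * x = y := by
        rw [hy_def, sub_eq_add_neg, hnegQ (x * v), add_comm]
      by_cases hyK : ∃ γ δ : F, y = algebraMap F Q γ + algebraMap F Q δ * v
      · obtain ⟨γ, δ, hγδ⟩ := hyK
        set N : F := γ * γ + δ * δ * b with hN_def
        have hyyN : y * y = algebraMap F Q N := by
          rw [hγδ, hsmul1 γ, ← Algebra.smul_def, hsmul1 N]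
          simp only [mul_add, add_mul, smul_mul_assoc, mul_smul_comm, smul_smul,
            one_mul, mul_one, hvv, hsmul1 b]
          rw [hN_def]
          match_scalars
          · ring
          · linear_combination (γ * δ) * h2F
        have hN0 : N ≠ 0 := by
          intro hN
          have hN' : γ * γ + δ * δ * b = 0 := by rw [← hN_def]; exact hN
          by_cases hδ : δ = 0
          · have hγ : γ = 0 := by
              apply mul_self_eq_zero.mp
              rw [hδ] at hN'
              linear_combination hN'
            rw [hγ, hδ] at hγδ
            simp at hγδ
            exact hy0 hγδ
          · apply hsq
            refine ⟨γ * δ⁻¹, ?_⟩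
            field_simp
            linear_combination hN' - (b * δ * δ) * h2F
        -- u := (v * K) * x with K = N⁻¹ y
        obtain ⟨K, hK_def⟩ : ∃ k : Q, k = algebraMap F Q N⁻¹ * y := ⟨_, rfl⟩
        have hKv : K * v = v * K := by
          rw [hK_def, mul_assoc, ← hyv, ← mul_assoc, Algebra.commutes N⁻¹ v, mul_assoc]
        obtain ⟨u₀, hu₀⟩ : ∃ z : Q, z = v * K := ⟨_, rfl⟩
        have hu₀v : u₀ * v = v * u₀ := by
          rw [hu₀, mul_assoc, hKv, ← mul_assoc]
        have hu₀y : u₀ * y = v := by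
          rw [hu₀, hK_def, mul_assoc, mul_assoc, hyyN, ← map_mul, inv_mul_cancel₀ hN0,
            map_one, mul_one]
        refine ⟨u₀ * x, ?_⟩
        calc u₀ * x * v + v * (u₀ * x)
            = u₀ * (x * v) + (v * u₀) * x := by noncomm_ring
        _ = u₀ * (x * v) + (u₀ * v) * x := by rw [hu₀v]
        _ = u₀ * (x * v + v * x) := by rw [mul_add, mul_assoc]
        _ = v := by rw [hxvvx, hu₀y]
      · -- impossible: derive contradiction
        exfalso
        have hfd : FiniteDimensional F Q := FiniteDimensional.of_finrank_pos (by omega)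
        set d : Q →ₗ[F] Q := LinearMap.mulLeft F v - LinearMap.mulRight F v with hd_def
        have hd : ∀ z : Q, d z = v * z - z * v := fun z => by
          simp [hd_def, LinearMap.sub_apply, LinearMap.mulLeft_apply,
            LinearMap.mulRight_apply]
        have hd1 : d 1 = 0 := by rw [hd, mul_one, one_mul, sub_self]
        have hdv : d v = 0 := by rw [hd, sub_self]
        have hdy : d y = 0 := by rw [hd, hyv, sub_self]
        have hdx : d x = y := by rw [hd, hy_def]
        have hker_ne_top : LinearMap.ker d ≠ ⊤ := by
          intro htop
          apply hx
          have h0 : d x = 0 := LinearMap.mem_ker.mp (htop ▸ Submodule.mem_top)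
          rw [hd] at h0
          exact (sub_eq_zero.mp h0)
        have hindep3 : LinearIndependent F ![(1 : Q), v, y] := by
          rw [Fintype.linearIndependent_iff]
          intro k hk
          rw [Fin.sum_univ_three] at hk
          simp only [Matrix.cons_val_zero, Matrix.cons_val_one, Matrix.head_cons,
            Matrix.cons_val_two, Matrix.tail_cons] at hk
          by_cases hk2 : k 2 = 0
          · rw [hk2, zero_smul, add_zero] at hk
            obtain ⟨h0, h1⟩ := comb2_zero v hv hk
            intro i
            fin_cases i
            · exact h0
            · exact h1
            · exact hk2
          · exfalso
            apply hyK
            have h1 : k 2 • y = -(k 0 • (1 : Q) + k 1 • v) := eq_neg_of_add_eq_zero_right hk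
            have h3 := congrArg (fun zz => (k 2)⁻¹ • zz) h1
            simp only [smul_smul, inv_mul_cancel₀ hk2, one_smul, smul_neg, smul_add] at h3
            refine ⟨-((k 2)⁻¹ * k 0), -((k 2)⁻¹ * k 1), ?_⟩
            rw [hsmul1, ← Algebra.smul_def, h3]
            module
        have hsple : Submodule.span F (Set.range ![(1 : Q), v, y]) ≤ LinearMap.ker d := by
          rw [Submodule.span_le]
          rintro z ⟨i, rfl⟩
          fin_cases i
          · exact LinearMap.mem_ker.mpr hd1
          · exact LinearMap.mem_ker.mpr hdv
          · exact LinearMap.mem_ker.mpr hdy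
        have h3le : 3 ≤ Module.finrank F (LinearMap.ker d) := by
          have := Submodule.finrank_mono hsple
          rw [finrank_span_eq_card hindep3] at this
          simpa using this
        have hker_le3 : Module.finrank F (LinearMap.ker d) ≤ 3 := by
          by_contra hcon
          push_neg at hcon
          have hle4 : Module.finrank F (LinearMap.ker d) ≤ 4 := hdim ▸ Submodule.finrank_le _
          have heq4 : Module.finrank F (LinearMap.ker d) = 4 := by omega
          exact hker_ne_top (Submodule.eq_top_of_finrank_eq (by rw [heq4, hdim]))
        have hkr : Module.finrank F (LinearMap.ker d) = 3 :=
          le_antisymm hker_le3 h3le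
        have hrr : Module.finrank F (LinearMap.range d) = 1 := by
          have := LinearMap.finrank_range_add_finrank_ker d
          rw [hdim, hkr] at this
          omega
        have hrange_eq : LinearMap.range d = Submodule.span F {y} := by
          symm
          apply Submodule.eq_of_le_of_finrank_le
          · rw [Submodule.span_le, Set.singleton_subset_iff]
            exact ⟨x, hdx⟩
          · rw [hrr, finrank_span_singleton hy0]
        have hvy_mem : v * y ∈ LinearMap.range d := by
          refine ⟨v * x, ?_⟩
          rw [hd, hy_def]
          noncomm_ring
        rw [hrange_eq] at hvy_mem
        obtain ⟨lam, hlam⟩ := Submodule.mem_span_singleton.mp hvy_mem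
        -- b = lam^2, contradiction
        apply hsq
        refine ⟨lam, ?_⟩
        have h1 : (v * v) * y = (lam * lam) • y := by
          rw [mul_assoc, ← hlam, mul_smul_comm, ← hlam, smul_smul]
        have h3 : (b - lam * lam) • y = 0 := by
          rw [sub_smul, ← h1, hvv, ← Algebra.smul_def, sub_self]
        rcases smul_eq_zero.mp h3 with h' | h'
        · linear_combination -h'
        · exact absurd h' hy0
  -- common tail
  have hrel : u * v = v * (1 - u) := by
    rw [mul_sub, mul_one]
    exact eq_sub_of_add_eq huv
  have hfac : ∀ β δ : F,
      ((2 : Q) * u - 1) * (algebraMap F Q β + algebraMap F Q δ * v) = 0 → β = 0 ∧ δ = 0 := by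
    intro β δ h
    rw [h2Q, zero_mul, zero_sub, neg_one_mul, neg_eq_zero] at h
    rw [hsmul1 β, ← Algebra.smul_def] at h
    exact comb2_zero v hv h
  have hindep : LinearIndependent F ![1, u, v, u * v] :=
    indep_of_rel v hv b hb hvv u hrel hfac
  have hspan : Submodule.span F {(1 : Q), u, v, u * v} = ⊤ :=
    span_top_of_indep hdim 1 u v (u * v) hindep
  -- u*u - u is central
  have huv' : u * v = v - v * u := eq_sub_of_add_eq huv
  have h2 : (u * u) * v = v - v * u - v * u + v * (u * u) := by
    calc (u * u) * v = u * (u * v) := mul_assoc u u v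
    _ = u * (v - v * u) := by rw [huv']
    _ = u * v - (u * v) * u := by rw [mul_sub, mul_assoc]
    _ = (v - v * u) - (v - v * u) * u := by rw [huv']
    _ = v - v * u - v * u + v * (u * u) := by noncomm_ring
  have hcv : (u * u - u) * v = v * (u * u - u) := by
    rw [sub_mul, h2, huv', mul_sub]
    abel
  have hcu : (u * u - u) * u = u * (u * u - u) := by noncomm_ring
  have hcuv : (u * u - u) * (u * v) = (u * v) * (u * u - u) := by
    calc (u * u - u) * (u * v) = ((u * u - u) * u) * v := (mul_assoc _ _ _).symm
    _ = (u * (u * u - u)) * v := by rw [hcu]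
    _ = u * ((u * u - u) * v) := mul_assoc _ _ _
    _ = u * (v * (u * u - u)) := by rw [hcv]
    _ = (u * v) * (u * u - u) := (mul_assoc _ _ _).symm
  obtain ⟨a, ha⟩ : ∃ a : F, u * u - u = algebraMap F Q a := by
    apply central_of_commutes _ hspan (u * u - u)
    intro t ht
    simp only [Set.mem_insert_iff, Set.mem_singleton_iff] at ht
    rcases ht with rfl | rfl | rfl | rfl
    · rw [mul_one, one_mul]
    · exact hcu
    · exact hcv
    · exact hcuv
  refine ⟨u, a, ?_, hrel, ha, hindep, hspan⟩
  have h4F : (4 : F) = 0 := by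
    rw [show (4 : F) = 2 * 2 from by norm_num, h2F, zero_mul]
  rw [h4F, zero_mul, add_zero]
  exact one_ne_zero

end QBC

/-- In an `F`-quaternion algebra `Q` (a central simple `F`-algebra of dimension 4), given
`v ∈ Q \ F` with `v² = b ∈ F^×`, there exist `u ∈ Q` and `a ∈ F` with `1 + 4a ≠ 0` such that
`uv = v(1 - u)` and `u² - u = a`; moreover `(1, u, v, uv)` is an `F`-basis of `Q`. -/
theorem quaternion_basis_completion
    (F Q : Type*) [Field F] [Ring Q] [Algebra F Q]
    [Algebra.IsCentral F Q] [IsSimpleRing Q]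
    (hdim : Module.finrank F Q = 4)
    (v : Q) (hv : v ∉ Set.range (algebraMap F Q))
    (b : F) (hb : b ≠ 0) (hvv : v * v = algebraMap F Q b) :
    ∃ (u : Q) (a : F), 1 + 4 * a ≠ 0 ∧
      u * v = v * (1 - u) ∧
      u * u - u = algebraMap F Q a ∧
      LinearIndependent F ![1, u, v, u * v] ∧
      Submodule.span F {(1 : Q), u, v, u * v} = ⊤ := by
  by_cases h2 : (2 : F) = 0
  · exact QBC.main_char_two hdim v hv b hb hvv h2
  · exact QBC.main_ne_two hdim v hv b hb hvv h2
end

section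
/- Let F be a field of characteristic 2 and Q an F-quaternion algebra (a central simple F-algebra of F-dimension 4). Let v ∈ Q with v ∉ F·1 and v·v = b·1 for some b ∈ F with b ≠ 0. Consider the F-linear map δ : Q → Q defined by δ(x) = x·v + v·x. Then the kernel of δ equals the F-linear span of {1, v}, and the image of δ also equals the F-linear span of {1, v}. -/
lemma simple_contra {F Q : Type*} [Field F] [Ring Q] [Algebra F Q] [IsSimpleRing Q]
    (S : Submodule F Q)
    (hl : ∀ {x y : Q}, y ∈ S → x * y ∈ S) (hr : ∀ {x y : Q}, x ∈ S → x * y ∈ S)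
    (u : Q) (hu : u ∈ S) (hune : u ≠ 0) (h1 : (1:Q) ∉ S) : False := by
  have hs := IsSimpleRing.simple (R := Q)
  set J := TwoSidedIdeal.mk' (S : Set Q) S.zero_mem (fun ha hb => S.add_mem ha hb)
    (fun ha => S.neg_mem ha) hl hr with hJ
  rcases hs.eq_bot_or_eq_top J with h | h
  · have : u ∈ J := by rw [hJ, TwoSidedIdeal.mem_mk']; exact hu
    rw [h, TwoSidedIdeal.mem_bot] at this
    exact hune this
  · have : (1:Q) ∈ J := by rw [h]; exact TwoSidedIdeal.mem_top _
    rw [hJ, TwoSidedIdeal.mem_mk'] at this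
    exact h1 this

lemma nilp_false (F Q : Type*) [Field F] [Ring Q] [Algebra F Q] [IsSimpleRing Q]
    (hdim : Module.finrank F Q = 4)
    (u w : Q) (hu2 : u * u = 0) (huw : u * w = 0) (hwu : w * u = 0)
    (hind : LinearIndependent F ![u, w]) : False := by
  have hfd : FiniteDimensional F Q := FiniteDimensional.of_finrank_pos (by omega)
  have hu0 : u ≠ 0 := by simpa using hind.ne_zero 0
  set ρ := LinearMap.mulRight F u with hρ
  set lam := LinearMap.mulLeft F u with hlam
  have hρ_app : ∀ x : Q, ρ x = x * u := fun x => rfl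
  have hlam_app : ∀ x : Q, lam x = u * x := fun x => rfl
  have hpair : ({u, w} : Set Q) = Set.range ![u, w] := by simp [Set.pair_comm]
  have hfr2 : Module.finrank F (Submodule.span F {u, w}) = 2 := by
    rw [hpair, finrank_span_eq_card hind]; simp
  have hspanρ : Submodule.span F {u, w} ≤ LinearMap.ker ρ := by
    rw [Submodule.span_le]
    rintro x (rfl | rfl) <;> simp [LinearMap.mem_ker, hρ_app, hu2, hwu]
  have hspanlam : Submodule.span F {u, w} ≤ LinearMap.ker lam := by
    rw [Submodule.span_le]
    rintro x (rfl | rfl) <;> simp [LinearMap.mem_ker, hlam_app, hu2, huw]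
  -- if range ρ (= Qu) has finrank ≤ 1 then uQ is a two-sided ideal: contradiction
  have hrankρ : 2 ≤ Module.finrank F (LinearMap.range ρ) := by
    by_contra hlt
    push_neg at hlt
    have hsu : Submodule.span F {u} ≤ LinearMap.range ρ :=
      (Submodule.span_singleton_le_iff_mem _ _).2 ⟨1, by simp [hρ_app]⟩
    have hequ : Submodule.span F {u} = LinearMap.range ρ := by
      apply Submodule.eq_of_le_of_finrank_le hsu
      rw [finrank_span_singleton hu0]; omega
    refine simple_contra (LinearMap.range lam) ?_ ?_ u ⟨1, by simp [hlam_app]⟩ hu0 ?_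
    · rintro x y ⟨z, rfl⟩
      have : x * u ∈ Submodule.span F {u} := hequ ▸ ⟨x, rfl⟩
      obtain ⟨c, hc⟩ := Submodule.mem_span_singleton.1 this
      refine ⟨c • z, ?_⟩
      rw [hlam_app, hlam_app, ← mul_assoc, ← hc]
      simp [smul_mul_assoc, mul_smul_comm]
    · rintro x y ⟨z, rfl⟩
      exact ⟨z * y, by rw [hlam_app, hlam_app, mul_assoc]⟩
    · rintro ⟨z, hz⟩
      rw [hlam_app] at hz
      apply hu0
      calc u = u * (u * z) := by rw [hz, mul_one]
        _ = 0 := by rw [← mul_assoc, hu2, zero_mul]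
  have hranklam : 2 ≤ Module.finrank F (LinearMap.range lam) := by
    by_contra hlt
    push_neg at hlt
    have hsu : Submodule.span F {u} ≤ LinearMap.range lam :=
      (Submodule.span_singleton_le_iff_mem _ _).2 ⟨1, by simp [hlam_app]⟩
    have hequ : Submodule.span F {u} = LinearMap.range lam := by
      apply Submodule.eq_of_le_of_finrank_le hsu
      rw [finrank_span_singleton hu0]; omega
    refine simple_contra (LinearMap.range ρ) ?_ ?_ u ⟨1, by simp [hρ_app]⟩ hu0 ?_
    · rintro x y ⟨z, rfl⟩
      exact ⟨x * z, by rw [hρ_app, hρ_app, mul_assoc]⟩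
    · rintro x y ⟨z, rfl⟩
      have : u * y ∈ Submodule.span F {u} := hequ ▸ ⟨y, rfl⟩
      obtain ⟨c, hc⟩ := Submodule.mem_span_singleton.1 this
      refine ⟨c • z, ?_⟩
      rw [hρ_app, hρ_app, mul_assoc, ← hc]
      simp [mul_assoc, mul_smul_comm, smul_mul_assoc]
    · rintro ⟨z, hz⟩
      rw [hρ_app] at hz
      apply hu0
      calc u = (z * u) * u := by rw [hz, one_mul]
        _ = 0 := by rw [mul_assoc, hu2, mul_zero]
  -- rank-nullity
  have hrnρ := LinearMap.finrank_range_add_finrank_ker ρ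
  have hrnlam := LinearMap.finrank_range_add_finrank_ker lam
  rw [hdim] at hrnρ hrnlam
  have hkerρ2 : Module.finrank F (LinearMap.ker ρ) ≤ 2 := by omega
  have hkerlam2 : Module.finrank F (LinearMap.ker lam) ≤ 2 := by omega
  have heqρ : Submodule.span F {u, w} = LinearMap.ker ρ :=
    Submodule.eq_of_le_of_finrank_le hspanρ (by omega)
  have heqlam : Submodule.span F {u, w} = LinearMap.ker lam :=
    Submodule.eq_of_le_of_finrank_le hspanlam (by omega)
  -- final two-sided ideal
  refine simple_contra (LinearMap.ker ρ) ?_ ?_ u (hspanρ (Submodule.subset_span (Set.mem_insert u {w}))) hu0 ?_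
  · intro x y hy
    rw [LinearMap.mem_ker, hρ_app] at hy ⊢
    rw [mul_assoc, hy, mul_zero]
  · intro x y hx
    have hx' : x ∈ LinearMap.ker lam := heqlam ▸ (heqρ.symm ▸ hx)
    rw [LinearMap.mem_ker, hlam_app] at hx'
    have : x * y ∈ LinearMap.ker lam := by
      rw [LinearMap.mem_ker, hlam_app, ← mul_assoc, hx', zero_mul]
    exact heqρ ▸ (heqlam.symm ▸ this)
  · intro h1
    rw [LinearMap.mem_ker, hρ_app, one_mul] at h1
    exact hu0 h1




/-- Let `F` be a field of characteristic 2 and `Q` an `F`-quaternion algebra (a central simple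
`F`-algebra of dimension 4). If `v ∈ Q \ F` satisfies `v² = b ∈ F^×`, then the `F`-linear map
`δ : Q → Q`, `x ↦ xv + vx`, has kernel and image both equal to the span of `{1, v}`. -/
theorem kernel_image_of_commutator_map
    (F Q : Type*) [Field F] [CharP F 2] [Ring Q] [Algebra F Q]
    [Algebra.IsCentral F Q] [IsSimpleRing Q]
    (hdim : Module.finrank F Q = 4)
    (v : Q) (hv : v ∉ Set.range (algebraMap F Q))
    (b : F) (hb : b ≠ 0) (hvv : v * v = algebraMap F Q b) :
    LinearMap.ker (LinearMap.mulRight F v + LinearMap.mulLeft F v)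
        = Submodule.span F {(1 : Q), v} ∧
    LinearMap.range (LinearMap.mulRight F v + LinearMap.mulLeft F v)
        = Submodule.span F {(1 : Q), v} := by
  have hfd : FiniteDimensional F Q := FiniteDimensional.of_finrank_pos (by omega)
  haveI : CharP Q 2 := charP_of_injective_algebraMap (algebraMap F Q).injective 2
  set δ := LinearMap.mulRight F v + LinearMap.mulLeft F v with hδ
  have hδ_app : ∀ x : Q, δ x = x * v + v * x := fun x => rfl
  have hker_iff : ∀ x : Q, x ∈ LinearMap.ker δ ↔ x * v = v * x := by
    intro x
    rw [LinearMap.mem_ker, hδ_app]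
    constructor
    · intro h
      have h2 : x * v = -(v * x) := eq_neg_of_add_eq_zero_left h
      rwa [CharTwo.neg_eq] at h2
    · intro h
      rw [h, CharTwo.add_self_eq_zero]
  have hspan_le : Submodule.span F {(1:Q), v} ≤ LinearMap.ker δ := by
    rw [Submodule.span_le]
    rintro x (rfl | rfl)
    · exact (hker_iff 1).2 (by rw [one_mul, mul_one])
    · exact (hker_iff _).2 rfl
  have hv_not_smul : ∀ a : F, a • (1:Q) ≠ v := fun a h =>
    hv ⟨a, by rw [Algebra.algebraMap_eq_smul_one]; exact h⟩
  have hind2 : LinearIndependent F ![(1:Q), v] :=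
    (LinearIndependent.pair_iff' one_ne_zero).2 hv_not_smul
  have hfr_span2 : Module.finrank F (Submodule.span F {(1:Q), v}) = 2 := by
    rw [show ({1, v} : Set Q) = Set.range ![(1:Q), v] by simp [Set.pair_comm],
      finrank_span_eq_card hind2]
    simp
  have hb1 : v * v = b • (1:Q) := by rw [hvv, Algebra.algebraMap_eq_smul_one]
  -- main inclusion
  have hker_le : LinearMap.ker δ ≤ Submodule.span F {(1:Q), v} := by
    intro w hw
    by_contra hwn
    have hcw : w * v = v * w := (hker_iff w).1 hw
    have hne_top : LinearMap.ker δ ≠ ⊤ := by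
      intro h
      apply hv
      have hvc : v ∈ Subalgebra.center F Q :=
        Subalgebra.mem_center_iff.2 fun x => (hker_iff x).1 (h ▸ Submodule.mem_top)
      have := (Algebra.IsCentral.out : Subalgebra.center F Q ≤ ⊥) hvc
      rwa [Algebra.mem_bot] at this
    have hind3 : LinearIndependent F ![w, (1:Q), v] := by
      apply linearIndependent_fin_cons.2
      refine ⟨hind2, ?_⟩
      simpa [Set.pair_comm] using hwn
    have hfr3 : Module.finrank F (Submodule.span F {w, (1:Q), v}) = 3 := by
      rw [show ({w, 1, v} : Set Q) = Set.range ![w, (1:Q), v] by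
        ext x; simp; tauto, finrank_span_eq_card hind3]
      simp
    have hsub : Submodule.span F {w, (1:Q), v} ≤ LinearMap.ker δ := by
      rw [Submodule.span_le]
      rintro x (rfl | rfl | rfl)
      · exact hw
      · exact hspan_le (Submodule.subset_span (Set.mem_insert _ _))
      · exact (hker_iff _).2 rfl
    have hClt : Module.finrank F (LinearMap.ker δ) < 4 := by
      rw [← hdim]
      exact Submodule.finrank_lt hne_top
    have hCeq : Submodule.span F {w, (1:Q), v} = LinearMap.ker δ :=
      Submodule.eq_of_le_of_finrank_le hsub (by omega)
    have hvwmem : v * w ∈ Submodule.span F {w, (1:Q), v} := by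
      rw [hCeq]
      exact (hker_iff _).2 (by rw [mul_assoc, hcw])
    obtain ⟨γ, z, hz, hvw_eq⟩ := Submodule.mem_span_insert.1 hvwmem
    obtain ⟨α, β, hz_eq⟩ := Submodule.mem_span_pair.1 hz
    have hvw2 : v * w = α • (1:Q) + β • v + γ • w := by
      rw [hvw_eq, ← hz_eq]; abel
    have hkey : b • w = (β*b + γ*α) • (1:Q) + (α + γ*β) • v + (γ*γ) • w := by
      have h1 : v * (v * w) = b • w := by
        rw [← mul_assoc, hvv, ← Algebra.smul_def]
      calc b • w = v * (v * w) := h1.symm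
        _ = v * (α • (1:Q) + β • v + γ • w) := by rw [hvw2]
        _ = α • v + β • (b • (1:Q)) + γ • (v * w) := by
            simp [mul_add, mul_smul_comm, hb1]
        _ = α • v + β • (b • (1:Q)) + γ • (α • (1:Q) + β • v + γ • w) := by rw [hvw2]
        _ = (β*b + γ*α) • (1:Q) + (α + γ*β) • v + (γ*γ) • w := by
            simp only [smul_add, smul_smul, add_smul]
            abel
    have hsub' : (b - γ*γ) • w = (β*b + γ*α) • (1:Q) + (α + γ*β) • v := by
      rw [sub_smul, hkey]; abel
    have hγb : γ * γ = b := by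
      by_contra hne
      apply hwn
      have hnz : b - γ*γ ≠ 0 := sub_ne_zero.2 (Ne.symm hne)
      rw [Submodule.mem_span_pair]
      refine ⟨(b - γ*γ)⁻¹ * (β*b + γ*α), (b - γ*γ)⁻¹ * (α + γ*β), ?_⟩
      calc ((b-γ*γ)⁻¹ * (β*b+γ*α)) • (1:Q) + ((b-γ*γ)⁻¹ * (α+γ*β)) • v
          = (b-γ*γ)⁻¹ • ((β*b+γ*α) • (1:Q) + (α+γ*β) • v) := by
            rw [smul_add, smul_smul, smul_smul]
        _ = (b-γ*γ)⁻¹ • ((b - γ*γ) • w) := by rw [hsub']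
        _ = w := by rw [smul_smul, inv_mul_cancel₀ hnz, one_smul]
    have hc0 : (β*b + γ*α) • (1:Q) + (α + γ*β) • v = 0 := by
      rw [← hsub', hγb, sub_self, zero_smul]
    have hc1 : α + γ*β = 0 := by
      by_contra hne
      apply hv
      refine ⟨(α+γ*β)⁻¹ * (-(β*b+γ*α)), ?_⟩
      have hcv1 : (α+γ*β) • v = -((β*b+γ*α) • (1:Q)) := by
        rw [eq_neg_iff_add_eq_zero, add_comm]; exact hc0
      calc algebraMap F Q ((α+γ*β)⁻¹ * (-(β*b+γ*α)))
          = ((α+γ*β)⁻¹ * (-(β*b+γ*α))) • (1:Q) := Algebra.algebraMap_eq_smul_one _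
        _ = (α+γ*β)⁻¹ • (-((β*b+γ*α) • (1:Q))) := by rw [mul_smul, neg_smul, smul_neg]
        _ = (α+γ*β)⁻¹ • ((α+γ*β) • v) := by rw [← hcv1]
        _ = v := by rw [smul_smul, inv_mul_cancel₀ hne, one_smul]
    have hγ0 : γ ≠ 0 := fun h => hb (by rw [← hγb, h, mul_zero])
    set u := v + γ • (1:Q) with hu
    set w' := w + β • (1:Q) with hw'
    have hexp : ∀ (x y : Q) (c d : F), (x + c • (1:Q)) * (y + d • (1:Q))
        = x * y + d • x + c • y + (c*d) • (1:Q) := by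
      intro x y c d
      simp [mul_add, add_mul, mul_smul_comm, smul_mul_assoc, smul_smul]
      rw [mul_comm d c]
      abel
    have hu2 : u * u = 0 := by
      rw [hu, hexp, hb1, hγb]
      rw [add_assoc (b • (1:Q)) (γ • v) (γ • v), CharTwo.add_self_eq_zero, add_zero,
        CharTwo.add_self_eq_zero]
    have huw' : u * w' = 0 := by
      rw [hu, hw', hexp, hvw2]
      have : α • (1:Q) + β • v + γ • w + β • v + γ • w + (γ*β) • (1:Q)
          = (α + γ*β) • (1:Q) + (β • v + β • v) + (γ • w + γ • w) := by
        rw [add_smul]; abel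
      rw [this, hc1, zero_smul]
      simp [CharTwo.add_self_eq_zero]
    have hw'u : w' * u = 0 := by
      rw [hu, hw', hexp, hcw, hvw2]
      have : α • (1:Q) + β • v + γ • w + γ • w + β • v + (β*γ) • (1:Q)
          = (α + γ*β) • (1:Q) + (β • v + β • v) + (γ • w + γ • w) := by
        rw [add_smul, mul_comm β γ]; abel
      rw [this, hc1, zero_smul]
      simp [CharTwo.add_self_eq_zero]
    have hindp : LinearIndependent F ![u, w'] := by
      rw [LinearIndependent.pair_iff]
      intro s t hst
      have hst2 : t • w + (s*γ + t*β) • (1:Q) + s • v = 0 := by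
        rw [← hst, hu, hw']
        simp only [smul_add, smul_smul, add_smul]
        abel
      have h3 := Fintype.linearIndependent_iff.1 hind3 ![t, s*γ + t*β, s] (by
        rw [Fin.sum_univ_three]
        simpa using hst2)
      exact ⟨by simpa using h3 2, by simpa using h3 0⟩
    exact nilp_false F Q hdim u w' hu2 huw' hw'u hindp
  have hker_eq : LinearMap.ker δ = Submodule.span F {(1:Q), v} :=
    le_antisymm hker_le hspan_le
  have hδδ : ∀ x : Q, δ (δ x) = 0 := by
    intro x
    rw [hδ_app, hδ_app]
    have h1 : (x*v + v*x)*v + v*(x*v + v*x)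
        = x*(v*v) + (v*(x*v) + v*(x*v)) + v*(v*x) := by
      simp only [add_mul, mul_add, mul_assoc]
      abel
    rw [h1, CharTwo.add_self_eq_zero, add_zero, hvv, ← mul_assoc, hvv, Algebra.commutes b x]
    exact CharTwo.add_self_eq_zero _
  have hrange_le : LinearMap.range δ ≤ Submodule.span F {(1:Q), v} := by
    rintro _ ⟨x, rfl⟩
    rw [← hker_eq]
    exact LinearMap.mem_ker.2 (hδδ x)
  have hrn := LinearMap.finrank_range_add_finrank_ker δ
  rw [hdim, hker_eq, hfr_span2] at hrn
  exact ⟨hker_eq, Submodule.eq_of_le_of_finrank_le hrange_le (by omega)⟩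
end

section
/- Let F be a field, let a, c ∈ F satisfy 1 + 4a ≠ 0 and 1 + 4c ≠ 0, and let b, d ∈ F be nonzero. In the F-algebra B = [a,b) ⊗_F [c,d), where the first factor has quaternion generators i, j (with i² = a + i, j² = b, ij + ji = j) and the second factor has quaternion generators u, v (with u² = c + u, v² = d, uv + vu = v), set i' = i⊗1 + (1 − 2i)⊗u and j' = j⊗1. Then i'·i' = i' + (a + c + 4ac)·(1⊗1), j'·j' = b·(1⊗1), and i'·j' + j'·i' = j'. (That is, i', j' satisfy the defining relations of the quaternion algebra [a + c + 4ac, b).) -/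
/-! The quaternion `F`-algebra `[a,b)`, i.e. the generalized quaternion algebra `ℍ[F; a, 1, b]`:
it has `F`-basis `(1, i, j, k)` with multiplication determined by
`i² = a + i`, `j² = b`, `i·j = k`, `j·i = j - k`. -/
@[ext]
structure QuatAlg (F : Type*) (a b : F) where
  re : F
  imI : F
  imJ : F
  imK : F

namespace QuatAlg

variable {F : Type*} [Field F] {a b : F}

instance : Zero (QuatAlg F a b) := ⟨⟨0, 0, 0, 0⟩⟩
instance : One (QuatAlg F a b) := ⟨⟨1, 0, 0, 0⟩⟩
instance : Add (QuatAlg F a b) :=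
  ⟨fun x y => ⟨x.re + y.re, x.imI + y.imI, x.imJ + y.imJ, x.imK + y.imK⟩⟩
instance : Neg (QuatAlg F a b) := ⟨fun x => ⟨-x.re, -x.imI, -x.imJ, -x.imK⟩⟩
instance : SMul F (QuatAlg F a b) :=
  ⟨fun r x => ⟨r * x.re, r * x.imI, r * x.imJ, r * x.imK⟩⟩

/-- Multiplication in `[a,b)`, determined by the relations
`i² = a + i`, `j² = b`, `ij = k`, `ji = j - k`. -/
instance : Mul (QuatAlg F a b) :=
  ⟨fun x y =>
    ⟨x.re * y.re + a * x.imI * y.imI + b * x.imJ * y.imJ + b * x.imJ * y.imK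
        - a * b * x.imK * y.imK,
      x.re * y.imI + x.imI * y.re + x.imI * y.imI - b * x.imJ * y.imK + b * x.imK * y.imJ,
      x.re * y.imJ + x.imJ * y.re + x.imJ * y.imI + a * x.imI * y.imK - a * x.imK * y.imI,
      x.re * y.imK + x.imK * y.re + x.imI * y.imJ - x.imJ * y.imI + x.imI * y.imK⟩⟩

@[simp] theorem zero_re : (0 : QuatAlg F a b).re = 0 := rfl
@[simp] theorem zero_imI : (0 : QuatAlg F a b).imI = 0 := rfl
@[simp] theorem zero_imJ : (0 : QuatAlg F a b).imJ = 0 := rfl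
@[simp] theorem zero_imK : (0 : QuatAlg F a b).imK = 0 := rfl
@[simp] theorem one_re : (1 : QuatAlg F a b).re = 1 := rfl
@[simp] theorem one_imI : (1 : QuatAlg F a b).imI = 0 := rfl
@[simp] theorem one_imJ : (1 : QuatAlg F a b).imJ = 0 := rfl
@[simp] theorem one_imK : (1 : QuatAlg F a b).imK = 0 := rfl
@[simp] theorem add_re (x y : QuatAlg F a b) : (x + y).re = x.re + y.re := rfl
@[simp] theorem add_imI (x y : QuatAlg F a b) : (x + y).imI = x.imI + y.imI := rfl
@[simp] theorem add_imJ (x y : QuatAlg F a b) : (x + y).imJ = x.imJ + y.imJ := rfl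
@[simp] theorem add_imK (x y : QuatAlg F a b) : (x + y).imK = x.imK + y.imK := rfl
@[simp] theorem neg_re (x : QuatAlg F a b) : (-x).re = -x.re := rfl
@[simp] theorem neg_imI (x : QuatAlg F a b) : (-x).imI = -x.imI := rfl
@[simp] theorem neg_imJ (x : QuatAlg F a b) : (-x).imJ = -x.imJ := rfl
@[simp] theorem neg_imK (x : QuatAlg F a b) : (-x).imK = -x.imK := rfl
@[simp] theorem smul_re (r : F) (x : QuatAlg F a b) : (r • x).re = r * x.re := rfl
@[simp] theorem smul_imI (r : F) (x : QuatAlg F a b) : (r • x).imI = r * x.imI := rfl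
@[simp] theorem smul_imJ (r : F) (x : QuatAlg F a b) : (r • x).imJ = r * x.imJ := rfl
@[simp] theorem smul_imK (r : F) (x : QuatAlg F a b) : (r • x).imK = r * x.imK := rfl
@[simp] theorem mul_re (x y : QuatAlg F a b) :
    (x * y).re = x.re * y.re + a * x.imI * y.imI + b * x.imJ * y.imJ + b * x.imJ * y.imK
        - a * b * x.imK * y.imK := rfl
@[simp] theorem mul_imI (x y : QuatAlg F a b) :
    (x * y).imI
      = x.re * y.imI + x.imI * y.re + x.imI * y.imI - b * x.imJ * y.imK + b * x.imK * y.imJ := rfl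
@[simp] theorem mul_imJ (x y : QuatAlg F a b) :
    (x * y).imJ
      = x.re * y.imJ + x.imJ * y.re + x.imJ * y.imI + a * x.imI * y.imK - a * x.imK * y.imI := rfl
@[simp] theorem mul_imK (x y : QuatAlg F a b) :
    (x * y).imK
      = x.re * y.imK + x.imK * y.re + x.imI * y.imJ - x.imJ * y.imI + x.imI * y.imK := rfl

instance : AddCommGroup (QuatAlg F a b) where
  add_assoc _ _ _ := by ext <;> simp <;> ring
  zero_add _ := by ext <;> simp
  add_zero _ := by ext <;> simp
  add_comm _ _ := by ext <;> simp <;> ring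
  neg_add_cancel _ := by ext <;> simp
  nsmul := nsmulRec
  zsmul := zsmulRec

instance : Ring (QuatAlg F a b) where
  __ := (inferInstance : AddCommGroup (QuatAlg F a b))
  left_distrib _ _ _ := by ext <;> simp <;> ring
  right_distrib _ _ _ := by ext <;> simp <;> ring
  zero_mul _ := by ext <;> simp
  mul_zero _ := by ext <;> simp
  mul_assoc _ _ _ := by ext <;> simp <;> ring
  one_mul _ := by ext <;> simp
  mul_one _ := by ext <;> simp

instance : Algebra F (QuatAlg F a b) where
  smul := (· • ·)
  algebraMap :=
    { toFun r := ⟨r, 0, 0, 0⟩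
      map_one' := rfl
      map_zero' := rfl
      map_mul' _ _ := by ext <;> simp
      map_add' _ _ := by ext <;> simp }
  commutes' _ _ := by ext <;> simp <;> ring
  smul_def' _ _ := by ext <;> simp


theorem algebraMap_def (r : F) : algebraMap F (QuatAlg F a b) r = ⟨r, 0, 0, 0⟩ := rfl
@[simp] theorem algebraMap_re (r : F) : (algebraMap F (QuatAlg F a b) r).re = r := rfl
@[simp] theorem algebraMap_imI (r : F) : (algebraMap F (QuatAlg F a b) r).imI = 0 := rfl
@[simp] theorem algebraMap_imJ (r : F) : (algebraMap F (QuatAlg F a b) r).imJ = 0 := rfl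
@[simp] theorem algebraMap_imK (r : F) : (algebraMap F (QuatAlg F a b) r).imK = 0 := rfl
@[simp] theorem sub_re (x y : QuatAlg F a b) : (x - y).re = x.re - y.re := by
  rw [sub_eq_add_neg, add_re, neg_re, sub_eq_add_neg]
@[simp] theorem sub_imI (x y : QuatAlg F a b) : (x - y).imI = x.imI - y.imI := by
  rw [sub_eq_add_neg, add_imI, neg_imI, sub_eq_add_neg]
@[simp] theorem sub_imJ (x y : QuatAlg F a b) : (x - y).imJ = x.imJ - y.imJ := by
  rw [sub_eq_add_neg, add_imJ, neg_imJ, sub_eq_add_neg]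
@[simp] theorem sub_imK (x y : QuatAlg F a b) : (x - y).imK = x.imK - y.imK := by
  rw [sub_eq_add_neg, add_imK, neg_imK, sub_eq_add_neg]

/-- The generator `i` of `[a,b)`, with `i² = a + i`. -/
def i : QuatAlg F a b := ⟨0, 1, 0, 0⟩

/-- The generator `j` of `[a,b)`, with `j² = b`, `ij + ji = j`. -/
def j : QuatAlg F a b := ⟨0, 0, 1, 0⟩

theorem i_mul_i : (i : QuatAlg F a b) * i = algebraMap F _ a + i := by
  ext <;> simp [i]

theorem j_mul_j : (j : QuatAlg F a b) * j = algebraMap F _ b := by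
  ext <;> simp [j]

theorem i_mul_j_add_j_mul_i : (i : QuatAlg F a b) * j + j * i = j := by
  ext <;> simp [i, j]

/-- The canonical (conjugation) involution `γ` of `[a,b)`, as an `F`-linear map:
`γ(1) = 1`, `γ(i) = 1 - i`, `γ(j) = -j`, `γ(k) = -k`. -/
def conj : QuatAlg F a b →ₗ[F] QuatAlg F a b where
  toFun x := ⟨x.re + x.imI, -x.imI, -x.imJ, -x.imK⟩
  map_add' _ _ := by ext <;> simp <;> ring
  map_smul' _ _ := by ext <;> simp <;> ring

@[simp] theorem conj_i : conj (i : QuatAlg F a b) = 1 - i := by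
  ext <;> simp [conj, i]

@[simp] theorem conj_j : conj (j : QuatAlg F a b) = -j := by
  ext <;> simp [conj, j]

theorem conj_mul (x y : QuatAlg F a b) : conj (x * y) = conj y * conj x := by
  ext <;> simp [conj] <;> ring

theorem conj_conj (x : QuatAlg F a b) : conj (conj x) = x := by
  ext <;> simp [conj]

end QuatAlg

open scoped TensorProduct

section Setup

variable (F : Type*) [Field F] (a b c d : F)

/-- The element `i' = i⊗1 + (1 - 2i)⊗u` of `B = [a,b) ⊗ [c,d)`. -/
noncomputable def iPrime : QuatAlg F a b ⊗[F] QuatAlg F c d :=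
  (QuatAlg.i : QuatAlg F a b) ⊗ₜ[F] (1 : QuatAlg F c d)
    + ((1 : QuatAlg F a b) - 2 * QuatAlg.i) ⊗ₜ[F] (QuatAlg.i : QuatAlg F c d)

/-- The element `j' = j⊗1` of `B = [a,b) ⊗ [c,d)`. -/
noncomputable def jPrime : QuatAlg F a b ⊗[F] QuatAlg F c d :=
  (QuatAlg.j : QuatAlg F a b) ⊗ₜ[F] (1 : QuatAlg F c d)

/-- The element `u' = 1⊗u` of `B = [a,b) ⊗ [c,d)`. -/
noncomputable def uPrime : QuatAlg F a b ⊗[F] QuatAlg F c d :=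
  (1 : QuatAlg F a b) ⊗ₜ[F] (QuatAlg.i : QuatAlg F c d)

/-- The element `v' = j⊗v` of `B = [a,b) ⊗ [c,d)`. -/
noncomputable def vPrime : QuatAlg F a b ⊗[F] QuatAlg F c d :=
  (QuatAlg.j : QuatAlg F a b) ⊗ₜ[F] (QuatAlg.j : QuatAlg F c d)

end Setup

/-- In `B = [a,b) ⊗ [c,d)`, the elements `i' = i⊗1 + (1-2i)⊗u` and `j' = j⊗1` satisfy the
defining relations of the quaternion algebra `[a + c + 4ac, b)`. -/
theorem iPrime_jPrime_relations
    (F : Type*) [Field F] (a b c d : F)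
    (ha : 1 + 4 * a ≠ 0) (hc : 1 + 4 * c ≠ 0) (hb : b ≠ 0) (hd : d ≠ 0) :
    iPrime F a b c d * iPrime F a b c d
        = iPrime F a b c d + algebraMap F (QuatAlg F a b ⊗[F] QuatAlg F c d) (a + c + 4 * a * c) ∧
    jPrime F a b c d * jPrime F a b c d
        = algebraMap F (QuatAlg F a b ⊗[F] QuatAlg F c d) b ∧
    iPrime F a b c d * jPrime F a b c d + jPrime F a b c d * iPrime F a b c d
        = jPrime F a b c d := by
  have htwo : (2 : QuatAlg F a b) = ⟨2, 0, 0, 0⟩ := by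
    have : (2 : QuatAlg F a b) = 1 + 1 := by norm_num
    rw [this]; ext <;> simp <;> norm_num
  have h1 : ((1 : QuatAlg F a b) - 2 * QuatAlg.i) * ((1 : QuatAlg F a b) - 2 * QuatAlg.i)
      = algebraMap F _ (1 + 4 * a) := by
    ext <;> simp [QuatAlg.i, QuatAlg.algebraMap_def, htwo] <;> ring
  have h2 : (QuatAlg.i : QuatAlg F a b) * ((1 : QuatAlg F a b) - 2 * QuatAlg.i)
      + ((1 : QuatAlg F a b) - 2 * QuatAlg.i) * QuatAlg.i
      = algebraMap F _ (-(4 * a)) - 2 * QuatAlg.i := by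
    ext <;> simp [QuatAlg.i, QuatAlg.algebraMap_def, htwo] <;> ring
  refine ⟨?_, ?_, ?_⟩
  · simp only [iPrime, mul_add, add_mul, Algebra.TensorProduct.tmul_mul_tmul, one_mul, mul_one,
      QuatAlg.i_mul_i]
    have hA : ((1:QuatAlg F a b) - 2 * QuatAlg.i) * QuatAlg.i
        = (-(2*a)) • (1:QuatAlg F a b) + (-1 : F) • QuatAlg.i := by
      ext <;> simp [QuatAlg.i, htwo] <;> ring
    have hB : (QuatAlg.i : QuatAlg F a b) * ((1:QuatAlg F a b) - 2 * QuatAlg.i)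
        = (-(2*a)) • (1:QuatAlg F a b) + (-1 : F) • QuatAlg.i := by
      ext <;> simp [QuatAlg.i, htwo] <;> ring
    have h2i : (2 : QuatAlg F a b) * QuatAlg.i = (2:F) • QuatAlg.i := by
      ext <;> simp [htwo, QuatAlg.i]
    rw [hA, hB, h1, h2i]
    simp only [Algebra.algebraMap_eq_smul_one, Algebra.TensorProduct.one_def,
      ← TensorProduct.smul_tmul', TensorProduct.add_tmul, TensorProduct.tmul_add,
      TensorProduct.sub_tmul, TensorProduct.tmul_smul, smul_smul]
    module
  · simp only [jPrime, Algebra.TensorProduct.tmul_mul_tmul, one_mul, QuatAlg.j_mul_j,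
      Algebra.TensorProduct.algebraMap_apply]
  · simp only [iPrime, jPrime, mul_add, add_mul, Algebra.TensorProduct.tmul_mul_tmul,
      one_mul, mul_one]
    have hC : ((1:QuatAlg F a b) - 2*QuatAlg.i) * QuatAlg.j
        = -(QuatAlg.j * ((1:QuatAlg F a b) - 2*QuatAlg.i)) := by
      ext <;> simp [QuatAlg.i, QuatAlg.j, htwo] <;> ring
    rw [hC]
    simp only [TensorProduct.neg_tmul]
    have hD : (QuatAlg.i * QuatAlg.j : QuatAlg F a b) ⊗ₜ[F] (1:QuatAlg F c d)
        + (QuatAlg.j * QuatAlg.i : QuatAlg F a b) ⊗ₜ[F] (1:QuatAlg F c d)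
        = (QuatAlg.j : QuatAlg F a b) ⊗ₜ[F] (1:QuatAlg F c d) := by
      rw [← TensorProduct.add_tmul, QuatAlg.i_mul_j_add_j_mul_i]
    rw [← hD]
    abel
end

section
/- Let F be a field, let a, c ∈ F satisfy 1 + 4a ≠ 0 and 1 + 4c ≠ 0, and let b, d ∈ F be nonzero. In the F-algebra B = [a,b) ⊗_F [c,d), where the first factor has quaternion generators i, j (with i² = a + i, j² = b, ij + ji = j) and the second factor has quaternion generators u, v (with u² = c + u, v² = d, uv + vu = v), set u' = 1⊗u and v' = j⊗v. Then u'·u' = u' + c·(1⊗1), v'·v' = (b·d)·(1⊗1), and u'·v' + v'·u' = v'. (That is, u', v' satisfy the defining relations of the quaternion algebra [c, bd).) -/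
open scoped TensorProduct

/-- In `B = [a,b) ⊗ [c,d)`, the elements `u' = 1⊗u` and `v' = j⊗v` satisfy the defining
relations of the quaternion algebra `[c, bd)`. -/
theorem uPrime_vPrime_relations
    (F : Type*) [Field F] (a b c d : F)
    (ha : 1 + 4 * a ≠ 0) (hc : 1 + 4 * c ≠ 0) (hb : b ≠ 0) (hd : d ≠ 0) :
    uPrime F a b c d * uPrime F a b c d
        = uPrime F a b c d + algebraMap F (QuatAlg F a b ⊗[F] QuatAlg F c d) c ∧
    vPrime F a b c d * vPrime F a b c d
        = algebraMap F (QuatAlg F a b ⊗[F] QuatAlg F c d) (b * d) ∧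
    uPrime F a b c d * vPrime F a b c d + vPrime F a b c d * uPrime F a b c d
        = vPrime F a b c d := by
  have key : ∀ r : F, algebraMap F (QuatAlg F a b ⊗[F] QuatAlg F c d) r
      = r • ((1 : QuatAlg F a b) ⊗ₜ[F] (1 : QuatAlg F c d)) := by
    intro r
    rw [Algebra.TensorProduct.algebraMap_apply, Algebra.algebraMap_eq_smul_one,
      TensorProduct.smul_tmul']
  refine ⟨?_, ?_, ?_⟩
  · rw [uPrime, Algebra.TensorProduct.tmul_mul_tmul, one_mul, QuatAlg.i_mul_i,
      TensorProduct.tmul_add, key, Algebra.algebraMap_eq_smul_one,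
      TensorProduct.tmul_smul, add_comm]
  · rw [vPrime, Algebra.TensorProduct.tmul_mul_tmul, QuatAlg.j_mul_j, QuatAlg.j_mul_j,
      key, Algebra.algebraMap_eq_smul_one, Algebra.algebraMap_eq_smul_one,
      TensorProduct.smul_tmul', TensorProduct.tmul_smul, TensorProduct.smul_tmul',
      smul_smul, mul_comm d b]
  · rw [uPrime, vPrime, Algebra.TensorProduct.tmul_mul_tmul,
      Algebra.TensorProduct.tmul_mul_tmul, one_mul, mul_one, ← TensorProduct.tmul_add,
      QuatAlg.i_mul_j_add_j_mul_i]
end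

section
/- Let F be a field, let a, c ∈ F satisfy 1 + 4a ≠ 0 and 1 + 4c ≠ 0, and let b, d ∈ F be nonzero. In the F-algebra B = [a,b) ⊗_F [c,d), where the first factor has quaternion generators i, j (with i² = a + i, j² = b, ij + ji = j) and the second factor has quaternion generators u, v (with u² = c + u, v² = d, uv + vu = v), set i' = i⊗1 + (1 − 2i)⊗u, j' = j⊗1, u' = 1⊗u, v' = j⊗v. Then each of i', j' commutes with each of u', v'; that is, i'u' = u'i', i'v' = v'i', j'u' = u'j', and j'v' = v'j'. -/
open scoped TensorProduct

/-- In `B = [a,b) ⊗ [c,d)`, each of `i' = i⊗1 + (1-2i)⊗u`, `j' = j⊗1` commutes with each of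
`u' = 1⊗u`, `v' = j⊗v`. -/
theorem primes_commute
    (F : Type*) [Field F] (a b c d : F)
    (ha : 1 + 4 * a ≠ 0) (hc : 1 + 4 * c ≠ 0) (hb : b ≠ 0) (hd : d ≠ 0) :
    iPrime F a b c d * uPrime F a b c d = uPrime F a b c d * iPrime F a b c d ∧
    iPrime F a b c d * vPrime F a b c d = vPrime F a b c d * iPrime F a b c d ∧
    jPrime F a b c d * uPrime F a b c d = uPrime F a b c d * jPrime F a b c d ∧
    jPrime F a b c d * vPrime F a b c d = vPrime F a b c d * jPrime F a b c d := by

  have two1 : (2 : QuatAlg F a b) = ⟨2,0,0,0⟩ := by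
    rw [← one_add_one_eq_two]; ext <;> simp <;> norm_num
  have h1 : (QuatAlg.i * QuatAlg.j : QuatAlg F a b) = (⟨0,0,0,1⟩ : QuatAlg F a b) := by
    ext <;> simp [QuatAlg.i, QuatAlg.j]
  have h2 : ((1 - 2 * QuatAlg.i) * QuatAlg.j : QuatAlg F a b)
      = (⟨0,0,1,0⟩ : QuatAlg F a b) - (2:F) • (⟨0,0,0,1⟩ : QuatAlg F a b) := by
    ext <;> simp [QuatAlg.i, QuatAlg.j, two1] <;> ring
  have h3 : (QuatAlg.j * QuatAlg.i : QuatAlg F a b)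
      = (⟨0,0,1,0⟩ : QuatAlg F a b) - (⟨0,0,0,1⟩ : QuatAlg F a b) := by
    ext <;> simp [QuatAlg.i, QuatAlg.j]
  have h4 : (QuatAlg.j * (1 - 2 * QuatAlg.i) : QuatAlg F a b)
      = (2:F) • (⟨0,0,0,1⟩ : QuatAlg F a b) - (⟨0,0,1,0⟩ : QuatAlg F a b) := by
    ext <;> simp [QuatAlg.i, QuatAlg.j, two1] <;> ring
  have g1 : (QuatAlg.i * QuatAlg.j : QuatAlg F c d) = (⟨0,0,0,1⟩ : QuatAlg F c d) := by
    ext <;> simp [QuatAlg.i, QuatAlg.j]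
  have g2 : (QuatAlg.j * QuatAlg.i : QuatAlg F c d)
      = (⟨0,0,1,0⟩ : QuatAlg F c d) - (⟨0,0,0,1⟩ : QuatAlg F c d) := by
    ext <;> simp [QuatAlg.i, QuatAlg.j]
  have hj : (QuatAlg.j : QuatAlg F c d) = (⟨0,0,1,0⟩ : QuatAlg F c d) := rfl
  refine ⟨?_, ?_, ?_, ?_⟩ <;>
    simp only [iPrime, uPrime, jPrime, vPrime, add_mul, mul_add,
      Algebra.TensorProduct.tmul_mul_tmul, one_mul, mul_one]
  · rw [h1, h2, h3, h4, g1, g2, hj]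
    simp only [TensorProduct.sub_tmul, TensorProduct.tmul_sub, ← TensorProduct.smul_tmul',
      TensorProduct.tmul_smul, smul_sub]
    module
end

section
/- Let F be a field, let a, c ∈ F satisfy 1 + 4a ≠ 0 and 1 + 4c ≠ 0, and let b, d ∈ F be nonzero. In the F-algebra B = [a,b) ⊗_F [c,d), where the first factor has quaternion generators i, j and the second factor has generators u, v, let σ = γ⊗γ be the F-linear map on B induced by the canonical involutions of the two factors (so σ(x⊗y) = γ(x)⊗γ(y), where γ(i) = 1 − i, γ(j) = −j, γ(u) = 1 − u, γ(v) = −v, γ fixes scalars). Set i' = i⊗1 + (1 − 2i)⊗u, j' = j⊗1, u' = 1⊗u, v' = j⊗v. Then σ(i') = i', σ(j') = −j', σ(u') = 1⊗1 − u', and σ(v') = v'. -/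
open scoped TensorProduct

/-- The involution `σ = γ⊗γ` on `B = [a,b) ⊗ [c,d)` induced by the canonical involutions
of the two factors, as an `F`-linear map (`σ(x⊗y) = γ(x)⊗γ(y)`). -/
noncomputable def sigmaTensor (F : Type*) [Field F] (a b c d : F) :
    QuatAlg F a b ⊗[F] QuatAlg F c d →ₗ[F] QuatAlg F a b ⊗[F] QuatAlg F c d :=
  TensorProduct.map QuatAlg.conj QuatAlg.conj

/-- The involution `σ = γ⊗γ` on `B = [a,b) ⊗ [c,d)` satisfies `σ(i') = i'`, `σ(j') = -j'`,
`σ(u') = 1⊗1 - u'` and `σ(v') = v'`. -/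
theorem sigma_on_primes
    (F : Type*) [Field F] (a b c d : F)
    (ha : 1 + 4 * a ≠ 0) (hc : 1 + 4 * c ≠ 0) (hb : b ≠ 0) (hd : d ≠ 0) :
    sigmaTensor F a b c d (iPrime F a b c d) = iPrime F a b c d ∧
    sigmaTensor F a b c d (jPrime F a b c d) = -jPrime F a b c d ∧
    sigmaTensor F a b c d (uPrime F a b c d)
      = (1 : QuatAlg F a b) ⊗ₜ[F] (1 : QuatAlg F c d) - uPrime F a b c d ∧
    sigmaTensor F a b c d (vPrime F a b c d) = vPrime F a b c d := by
  have hconj2 : QuatAlg.conj ((1 : QuatAlg F a b) - 2 * QuatAlg.i)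
      = -(1 : QuatAlg F a b) + 2 * QuatAlg.i := by
    rw [two_mul, map_sub, map_add, QuatAlg.conj_i]
    have h1 : QuatAlg.conj (1 : QuatAlg F a b) = 1 := by ext <;> simp [QuatAlg.conj]
    rw [h1]; abel
  have hconj1 : QuatAlg.conj (1 : QuatAlg F a b) = 1 := by
    ext <;> simp [QuatAlg.conj]
  have hconj1' : QuatAlg.conj (1 : QuatAlg F c d) = 1 := by
    ext <;> simp [QuatAlg.conj]
  refine ⟨?_, ?_, ?_, ?_⟩
  · simp only [iPrime, sigmaTensor, map_add, TensorProduct.map_tmul, hconj2, hconj1,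
      hconj1', QuatAlg.conj_i]
    simp only [two_mul, TensorProduct.tmul_sub, TensorProduct.sub_tmul, TensorProduct.add_tmul,
      TensorProduct.neg_tmul]
    abel
  · simp only [jPrime, sigmaTensor, TensorProduct.map_tmul, QuatAlg.conj_j, hconj1',
      TensorProduct.neg_tmul]
  · simp only [uPrime, sigmaTensor, TensorProduct.map_tmul, QuatAlg.conj_i, hconj1,
      TensorProduct.tmul_sub]
  · simp only [vPrime, sigmaTensor, TensorProduct.map_tmul, QuatAlg.conj_j,
      TensorProduct.neg_tmul, TensorProduct.tmul_neg, neg_neg]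
end
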